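/- arXiv:2305.19961 — 6 statements merged into one kernel-verified Lean document; each statement's English description precedes it below -/
import Mathlib

section
/- Let f: X → X and g: Y → Y be invertible maps on finite sets. Suppose f has order ω and the triple (X, f, F(q)) exhibits the cyclic sieving phenomenon (i.e., for every integer k, the number of elements of X fixed by f^k equals F evaluated at e^{2πik/ω}). Suppose N is a positive integer and χ is a positive rational such that for each orbit size k of f with multiplicity m, the map g has exactly χm orbits of size Nk (and these account for all orbits of g). Then g has order Nω, and the triple (Y, g, χ·[N]_{q^ω}·F(q)) exhibits the cyclic sieving phenomenon, where [N]_{q^ω} = 1 + q^ω + q^{2ω} + ... + q^{(N-1)ω}. -/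
open scoped Classical

/-- The triple `(X, f, F(q))` exhibits the cyclic sieving phenomenon: for every integer `k`,
the number of elements fixed by `f^k` equals `F(e^{2πik/ω})`, where `ω` is the order of `f`. -/
noncomputable def ExhibitsCSP {X : Type*} [Fintype X] (f : Equiv.Perm X) (F : Polynomial ℂ) : Prop :=
  ∀ k : ℤ, ((Finset.univ.filter fun x => (f ^ k) x = x).card : ℂ)
    = F.eval (Complex.exp (2 * (Real.pi : ℂ) * Complex.I * (k : ℂ) / (orderOf f : ℂ)))

private lemma zpow_fix_iff {α : Type*} (h : Equiv.Perm α) (y : α) (k : ℤ) :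
    (h ^ k) y = y ↔ (Function.minimalPeriod (fun z => h z) y : ℤ) ∣ k := by
  simpa [Equiv.Perm.smul_def] using
    MulAction.zpow_smul_eq_iff_minimalPeriod_dvd (a := h) (b := y) (n := k)

private lemma pow_fix_iff {α : Type*} (h : Equiv.Perm α) (y : α) (k : ℕ) :
    (h ^ k) y = y ↔ Function.minimalPeriod (fun z => h z) y ∣ k := by
  simpa [Equiv.Perm.smul_def] using
    MulAction.pow_smul_eq_iff_minimalPeriod_dvd (a := h) (b := y) (n := k)

private lemma mp_dvd_orderOf {α : Type*} [Fintype α] (h : Equiv.Perm α) (y : α) :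
    Function.minimalPeriod (fun z => h z) y ∣ orderOf h := by
  rw [← pow_fix_iff]
  simp [pow_orderOf_eq_one]

private lemma eval_aux (χc : ℂ) (ω N : ℕ) (F : Polynomial ℂ) (z : ℂ) :
    ((χc • ((∑ j ∈ Finset.range N, (Polynomial.X : Polynomial ℂ) ^ (ω * j)) * F)).eval z)
      = χc * (∑ j ∈ Finset.range N, (z ^ ω) ^ j) * F.eval z := by
  simp [Polynomial.eval_finset_sum, pow_mul, mul_assoc]

theorem stmt0 {X Y : Type*} [Fintype X] [Fintype Y] (hX : Nonempty X)
    (f : Equiv.Perm X) (g : Equiv.Perm Y) (F : Polynomial ℂ)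
    (hCSP : ExhibitsCSP f F) (N : ℕ) (hN : 0 < N) (χ : ℚ) (hχ : 0 < χ)
    (hdvd : ∀ y : Y, N ∣ Function.minimalPeriod (fun y => g y) y)
    (hcount : ∀ k : ℕ,
      ((Finset.univ.filter fun y : Y => Function.minimalPeriod (fun y => g y) y = N * k).card : ℚ)
        = χ * N * ((Finset.univ.filter fun x : X => Function.minimalPeriod (fun x => f x) x = k).card : ℚ)) :
    orderOf g = N * orderOf f ∧
      ExhibitsCSP g ((χ : ℂ) •
        ((∑ j ∈ Finset.range N, (Polynomial.X : Polynomial ℂ) ^ (orderOf f * j)) * F)) := by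
  classical
  have hωpos : 0 < orderOf f := orderOf_pos f
  have hNQ : (0:ℚ) < χ * N := by positivity
  -- existence transfer from Y to X
  have hYX : ∀ y : Y, ∃ x : X,
      Function.minimalPeriod (fun y => g y) y = N * Function.minimalPeriod (fun x => f x) x := by
    intro y
    obtain ⟨m, hm⟩ := hdvd y
    have hy : y ∈ Finset.univ.filter
        fun y' : Y => Function.minimalPeriod (fun y => g y) y' = N * m := by
      simp [hm]
    have h0 : (0:ℚ) < ((Finset.univ.filter
        fun y' : Y => Function.minimalPeriod (fun y => g y) y' = N * m).card : ℚ) := by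
      exact_mod_cast Finset.card_pos.mpr ⟨y, hy⟩
    rw [hcount m] at h0
    have hc : (0:ℚ) < ((Finset.univ.filter
        fun x : X => Function.minimalPeriod (fun x => f x) x = m).card : ℚ) := by
      by_contra hcon
      push_neg at hcon
      have hz : ((Finset.univ.filter
          fun x : X => Function.minimalPeriod (fun x => f x) x = m).card : ℚ) = 0 := le_antisymm hcon (by positivity)
      rw [hz, mul_zero] at h0
      exact lt_irrefl 0 h0
    have : 0 < (Finset.univ.filter
        fun x : X => Function.minimalPeriod (fun x => f x) x = m).card := by exact_mod_cast hc
    obtain ⟨x, hx⟩ := Finset.card_pos.mp this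
    simp only [Finset.mem_filter] at hx
    exact ⟨x, by rw [hm, hx.2]⟩
  -- existence transfer from X to Y
  have hXY : ∀ x : X, ∃ y : Y,
      Function.minimalPeriod (fun y => g y) y = N * Function.minimalPeriod (fun x => f x) x := by
    intro x
    have hx : x ∈ Finset.univ.filter
        fun x' : X => Function.minimalPeriod (fun x => f x) x'
          = Function.minimalPeriod (fun x => f x) x := by simp
    have h0 : (0:ℚ) < ((Finset.univ.filter
        fun x' : X => Function.minimalPeriod (fun x => f x) x'
          = Function.minimalPeriod (fun x => f x) x).card : ℚ) := by
      exact_mod_cast Finset.card_pos.mpr ⟨x, hx⟩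
    have h1 : (0:ℚ) < ((Finset.univ.filter
        fun y : Y => Function.minimalPeriod (fun y => g y) y
          = N * Function.minimalPeriod (fun x => f x) x).card : ℚ) := by
      rw [hcount]; positivity
    have : 0 < (Finset.univ.filter
        fun y : Y => Function.minimalPeriod (fun y => g y) y
          = N * Function.minimalPeriod (fun x => f x) x).card := by exact_mod_cast h1
    obtain ⟨y, hy⟩ := Finset.card_pos.mp this
    simp only [Finset.mem_filter] at hy
    exact ⟨y, hy.2⟩
  -- order computation
  have hog : orderOf g = N * orderOf f := by
    have h1 : orderOf g ∣ N * orderOf f := by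
      apply orderOf_dvd_of_pow_eq_one
      ext y
      simp only [Equiv.Perm.coe_one, id_eq]
      rw [pow_fix_iff]
      obtain ⟨x, hx⟩ := hYX y
      rw [hx]
      exact mul_dvd_mul_left N (mp_dvd_orderOf f x)
    have h2 : N * orderOf f ∣ orderOf g := by
      obtain ⟨x0⟩ := hX
      obtain ⟨y0, hy0⟩ := hXY x0
      have hNg : N ∣ orderOf g :=
        dvd_trans (hdvd y0) (mp_dvd_orderOf g y0)
      obtain ⟨s, hs⟩ := hNg
      have hfs : f ^ s = 1 := by
        ext x
        simp only [Equiv.Perm.coe_one, id_eq]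
        rw [pow_fix_iff]
        obtain ⟨y, hy⟩ := hXY x
        have hmp : N * Function.minimalPeriod (fun x => f x) x ∣ N * s := by
          rw [← hy, ← hs]; exact mp_dvd_orderOf g y
        exact (mul_dvd_mul_iff_left hN.ne').mp hmp
      have : orderOf f ∣ s := orderOf_dvd_of_pow_eq_one hfs
      rw [hs]
      exact mul_dvd_mul_left N this
    exact Nat.dvd_antisymm h1 h2
  refine ⟨hog, ?_⟩
  -- the key counting lemma
  have hcard : ∀ t : ℤ,
      ((Finset.univ.filter fun y : Y => (g ^ ((N : ℤ) * t)) y = y).card : ℚ)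
        = χ * N * ((Finset.univ.filter fun x : X => (f ^ t) x = x).card : ℚ) := by
    intro t
    set t₀ : Finset ℕ := (Finset.range (orderOf f + 1)).filter (fun m => (m:ℤ) ∣ t) with ht₀
    have hS : (Finset.univ.filter fun y : Y => (g ^ ((N : ℤ) * t)) y = y).card
        = ∑ m ∈ t₀, (Finset.univ.filter
            fun y : Y => Function.minimalPeriod (fun y => g y) y = N * m).card := by
      rw [Finset.card_eq_sum_card_fiberwise
        (f := fun y : Y => Function.minimalPeriod (fun y => g y) y / N) (t := t₀)]
      · apply Finset.sum_congr rfl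
        intro m hm
        simp only [ht₀, Finset.mem_filter, Finset.mem_range] at hm
        congr 1
        ext y
        simp only [Finset.mem_filter, Finset.mem_univ, true_and]
        constructor
        · rintro ⟨-, hdiv⟩
          obtain ⟨m', hm'⟩ := hdvd y
          rw [hm', Nat.mul_div_cancel_left _ hN] at hdiv
          rw [hm', hdiv]
        · intro hmp
          refine ⟨?_, by rw [hmp, Nat.mul_div_cancel_left _ hN]⟩
          rw [zpow_fix_iff, hmp]
          push_cast
          exact mul_dvd_mul_left (N:ℤ) hm.2
      · intro y hy
        simp only [Finset.mem_coe, Finset.mem_filter, Finset.mem_univ, true_and] at hy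
        obtain ⟨x, hx⟩ := hYX y
        simp only [ht₀, Finset.mem_coe, Finset.mem_filter, Finset.mem_range]
        rw [hx, Nat.mul_div_cancel_left _ hN]
        constructor
        · exact Nat.lt_succ_of_le (Nat.le_of_dvd hωpos (mp_dvd_orderOf f x))
        · rw [zpow_fix_iff, hx] at hy
          push_cast at hy
          exact (mul_dvd_mul_iff_left (by exact_mod_cast hN.ne' : (N:ℤ) ≠ 0)).mp hy
    have hT : (Finset.univ.filter fun x : X => (f ^ t) x = x).card
        = ∑ m ∈ t₀, (Finset.univ.filter
            fun x : X => Function.minimalPeriod (fun x => f x) x = m).card := by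
      rw [Finset.card_eq_sum_card_fiberwise
        (f := fun x : X => Function.minimalPeriod (fun x => f x) x) (t := t₀)]
      · apply Finset.sum_congr rfl
        intro m hm
        simp only [ht₀, Finset.mem_filter, Finset.mem_range] at hm
        congr 1
        ext x
        simp only [Finset.mem_filter, Finset.mem_univ, true_and]
        constructor
        · rintro ⟨-, h⟩; exact h
        · intro hmp
          refine ⟨?_, hmp⟩
          rw [zpow_fix_iff, hmp]
          exact hm.2
      · intro x hx
        simp only [Finset.mem_coe, Finset.mem_filter, Finset.mem_univ, true_and] at hx
        simp only [ht₀, Finset.mem_coe, Finset.mem_filter, Finset.mem_range]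
        constructor
        · exact Nat.lt_succ_of_le (Nat.le_of_dvd hωpos (mp_dvd_orderOf f x))
        · rw [zpow_fix_iff] at hx
          exact hx
    rw [hS, hT]
    push_cast
    rw [Finset.mul_sum]
    exact Finset.sum_congr rfl fun m _ => hcount m
  -- the CSP statement
  intro k
  have hNC : (N:ℂ) ≠ 0 := by exact_mod_cast hN.ne'
  have hωC : ((orderOf f : ℕ):ℂ) ≠ 0 := by exact_mod_cast hωpos.ne'
  rw [hog]
  by_cases hk : (N:ℤ) ∣ k
  · obtain ⟨t, rfl⟩ := hk
    have h1 := hcard t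
    have h2 := hCSP t
    have hζ : 2 * (Real.pi : ℂ) * Complex.I * (((N:ℤ) * t : ℤ) : ℂ) / (((N * orderOf f : ℕ)) : ℂ)
        = 2 * (Real.pi : ℂ) * Complex.I * (t : ℂ) / ((orderOf f : ℕ) : ℂ) := by
      push_cast
      field_simp
    rw [hζ, eval_aux]
    have hζω : Complex.exp (2 * (Real.pi : ℂ) * Complex.I * (t : ℂ) / ((orderOf f : ℕ) : ℂ)) ^ (orderOf f)
        = 1 := by
      rw [← Complex.exp_nat_mul]
      have : (orderOf f : ℂ) * (2 * (Real.pi : ℂ) * Complex.I * (t : ℂ) / ((orderOf f : ℕ) : ℂ))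
          = (t : ℂ) * (2 * (Real.pi : ℂ) * Complex.I) := by
        field_simp
      rw [this]
      exact Complex.exp_int_mul_two_pi_mul_I t
    rw [hζω]
    simp only [one_pow, Finset.sum_const, Finset.card_range, nsmul_eq_mul, mul_one]
    rw [← h2]
    have : ((Finset.univ.filter fun y : Y => (g ^ ((N : ℤ) * t)) y = y).card : ℂ)
        = (χ:ℂ) * N * ((Finset.univ.filter fun x : X => (f ^ t) x = x).card : ℂ) := by
      exact_mod_cast congrArg (fun q : ℚ => (q : ℂ)) h1
    rw [this]
  · -- no fixed points
    have hS0 : (Finset.univ.filter fun y : Y => (g ^ k) y = y) = ∅ := by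
      rw [Finset.filter_eq_empty_iff]
      intro y _
      rw [zpow_fix_iff]
      intro hdv
      exact hk (dvd_trans (Int.natCast_dvd_natCast.mpr (hdvd y)) hdv)
    rw [hS0]
    rw [eval_aux]
    set z := Complex.exp (2 * (Real.pi : ℂ) * Complex.I * (k : ℂ) / (((N * orderOf f : ℕ)) : ℂ)) with hz
    have hzω : z ^ (orderOf f) = Complex.exp (2 * (Real.pi : ℂ) * Complex.I * (k : ℂ) / (N : ℂ)) := by
      rw [hz, ← Complex.exp_nat_mul]
      congr 1
      push_cast
      field_simp
    have hne : z ^ (orderOf f) ≠ 1 := by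
      rw [hzω]
      intro hcon
      rw [Complex.exp_eq_one_iff] at hcon
      obtain ⟨n, hn⟩ := hcon
      apply hk
      refine ⟨n, ?_⟩
      have h2πI : (2 * (Real.pi : ℂ) * Complex.I) ≠ 0 := by
        simp [Real.pi_ne_zero, Complex.I_ne_zero]
      field_simp at hn
      have : (k : ℂ) = (N : ℂ) * (n : ℂ) := by
        apply mul_left_cancel₀ h2πI
        linear_combination (2 * (Real.pi : ℂ) * Complex.I) * hn
      exact_mod_cast this
    have hgeom : (∑ j ∈ Finset.range N, (z ^ (orderOf f)) ^ j) = 0 := by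
      rw [geom_sum_eq hne]
      have : (z ^ (orderOf f)) ^ N = 1 := by
        rw [hzω, ← Complex.exp_nat_mul]
        have : (N : ℂ) * (2 * (Real.pi : ℂ) * Complex.I * (k : ℂ) / (N : ℂ))
            = (k : ℂ) * (2 * (Real.pi : ℂ) * Complex.I) := by
          field_simp
        rw [this]
        exact Complex.exp_int_mul_two_pi_mul_I k
      rw [this]
      simp
    rw [hgeom]
    simp
end

section
/- Let n and d be positive integers with 1 ≤ d ≤ n-1. The rotation operator Rot_{n,d} on compositions of n with d parts, defined by Rot_{n,d}(a_1, a_2, ..., a_d) = (a_2, ..., a_d, a_1), has every orbit size divisible by d/gcd(n,d). -/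
/-- The rotation operator on `d`-tuples: `Rot(a_1, ..., a_d) = (a_2, ..., a_d, a_1)`. -/
def rot (d : ℕ) (a : Fin d → ℕ) : Fin d → ℕ := fun i => a (finRotate d i)

open Fin.CommRing

lemma rot_iterate (d k : ℕ) (a : Fin d → ℕ) :
    (rot d)^[k] a = fun i => a ((finRotate d)^[k] i) := by
  induction k with
  | zero => rfl
  | succ k ih =>
    funext i
    rw [Function.iterate_succ_apply' (rot d)]
    show ((rot d)^[k] a) (finRotate d i) = _
    rw [ih]
    show a ((finRotate d)^[k] (finRotate d i)) = _
    rw [← Function.iterate_succ_apply]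

lemma finRotate_iterate (m k : ℕ) (i : Fin (m+1)) :
    (finRotate (m+1))^[k] i = i + (k : Fin (m+1)) := by
  induction k with
  | zero => simp
  | succ k ih =>
    rw [Function.iterate_succ_apply', ih, finRotate_succ_apply]
    push_cast
    ring

theorem stmt5 (n d : ℕ) (hd : 1 ≤ d) (hdn : d ≤ n - 1) (hn : 1 ≤ n)
    (a : Fin d → ℕ) (hpos : ∀ i, 0 < a i) (hsum : ∑ i, a i = n) :
    d / Nat.gcd n d ∣ Function.minimalPeriod (rot d) a := by
  obtain ⟨m, rfl⟩ : ∃ m, d = m + 1 := ⟨d - 1, by omega⟩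
  have hper : Function.IsPeriodicPt (rot (m+1)) (m+1) a := by
    show (rot (m+1))^[m+1] a = a
    rw [rot_iterate]
    funext i
    rw [finRotate_iterate]
    simp
  set p := Function.minimalPeriod (rot (m+1)) a with hp
  have hpd : p ∣ m + 1 := hper.minimalPeriod_dvd
  have hppos : 0 < p := hper.minimalPeriod_pos (by omega)
  have hpa : (rot (m+1))^[p] a = a := Function.isPeriodicPt_minimalPeriod (rot (m+1)) a
  have hshift : ∀ i : Fin (m+1), a (i + (p : Fin (m+1))) = a i := by
    intro i
    conv_rhs => rw [← hpa]
    rw [rot_iterate]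
    simp [finRotate_iterate]
  have hshiftmul : ∀ (k : ℕ) (i : Fin (m+1)), a (i + ((k * p : ℕ) : Fin (m+1))) = a i := by
    intro k
    induction k with
    | zero => simp
    | succ k ih =>
      intro i
      have : ((((k+1) * p : ℕ)) : Fin (m+1)) = ((k*p : ℕ) : Fin (m+1)) + (p : Fin (m+1)) := by
        push_cast; ring
      rw [this, ← add_assoc, hshift (i + ((k*p : ℕ) : Fin (m+1))), ih]
  obtain ⟨e, he⟩ := hpd
  have hepos : 0 < e := Nat.pos_of_ne_zero fun h0 => by simp [h0] at he
  -- n = e * (sum of first p entries)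
  have key : e ∣ n := by
    rw [← hsum]
    have hme : m + 1 = e * p := by rw [he]; ring
    rw [← Fintype.sum_equiv ((finProdFinEquiv (m := e) (n := p)).trans (finCongr hme.symm))
      (fun x : Fin e × Fin p => a (((finProdFinEquiv x : Fin (e*p)) : ℕ) : Fin (m+1))) a ?_]
    · -- each inner value independent of first coordinate
      rw [Fintype.sum_prod_type]
      have hconst : ∀ (i : Fin e) (j : Fin p),
          a ((((finProdFinEquiv (i, j) : Fin (e*p)) : ℕ)) : Fin (m+1)) = a ((j : ℕ) : Fin (m+1)) := by
        intro i j
        have hv : ((finProdFinEquiv (i, j) : Fin (e*p)) : ℕ) = (j : ℕ) + p * (i : ℕ) := rfl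
        rw [hv]
        have : (((j : ℕ) + p * (i : ℕ) : ℕ) : Fin (m+1))
            = ((j : ℕ) : Fin (m+1)) + (((i : ℕ) * p : ℕ) : Fin (m+1)) := by push_cast; ring
        rw [this, hshiftmul]
      have hc : ∑ i : Fin e, ∑ j : Fin p, a ((((finProdFinEquiv (i, j) : Fin (e*p)) : ℕ)) : Fin (m+1))
          = e * ∑ j : Fin p, a ((j : ℕ) : Fin (m+1)) := by
        calc ∑ i : Fin e, ∑ j : Fin p, a ((((finProdFinEquiv (i, j) : Fin (e*p)) : ℕ)) : Fin (m+1))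
            = ∑ _i : Fin e, ∑ j : Fin p, a ((j : ℕ) : Fin (m+1)) := by
              apply Finset.sum_congr rfl; intros i _; apply Finset.sum_congr rfl; intros j _
              exact hconst i j
          _ = e * ∑ j : Fin p, a ((j : ℕ) : Fin (m+1)) := by simp [Finset.sum_const, mul_comm]
      rw [hc]
      exact dvd_mul_right e _
    · intro x
      have hlt : ((finProdFinEquiv x : Fin (e*p)) : ℕ) < m + 1 := by
        rw [hme]; exact (finProdFinEquiv x).isLt
      show a _ = a _
      congr 1
      apply Fin.ext
      rw [Fin.val_natCast, Nat.mod_eq_of_lt hlt]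
      rfl
  -- now divisibility arithmetic
  have hed : e ∣ m + 1 := ⟨p, by rw [he]; ring⟩
  have heg : e ∣ Nat.gcd n (m+1) := Nat.dvd_gcd key hed
  obtain ⟨t, ht⟩ := heg
  have hgd : Nat.gcd n (m+1) ∣ m + 1 := Nat.gcd_dvd_right _ _
  have htp : t ∣ p := by
    have : e * t ∣ e * p := by rw [← ht, mul_comm e p, ← he]; exact hgd
    exact (mul_dvd_mul_iff_left (by omega : e ≠ 0)).mp this
  have htpos : 0 < t := Nat.pos_of_ne_zero fun h0 => by
    rw [h0, mul_zero] at ht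
    have := Nat.gcd_pos_of_pos_right n (show 0 < m + 1 by omega)
    omega
  have : (m+1) / Nat.gcd n (m+1) = p / t := by
    rw [ht, he, mul_comm p e, Nat.mul_div_mul_left _ _ hepos]
  rw [this]
  exact Nat.div_dvd_of_dvd htp
end

section
/- Let G be a connected graph with n vertices, let v be a vertex of G, let i ∈ ℤ/nℤ, and let B ⊆ ℤ/nℤ with i-1 ∉ B. Then the indicator statistic 𝟙_{v,i} (which assigns 1 to a labeling σ if σ(v) = i and 0 otherwise) is homomesic for the map cyc∘Bro_B with average 1/n: for every orbit O of cyc∘Bro_B on Λ_G, the number of labelings σ ∈ O with σ(v) = i equals |O|/n. -/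
open scoped Classical

noncomputable def toggle {V : Type*} {n : ℕ} (G : SimpleGraph V) (i : ZMod n)
    (σ : V ≃ ZMod n) : V ≃ ZMod n :=
  if G.Adj (σ.symm i) (σ.symm (i + 1)) then σ else σ.trans (Equiv.swap i (i + 1))

noncomputable def applyToggles {V : Type*} {n : ℕ} (G : SimpleGraph V)
    (L : List (ZMod n)) (σ : V ≃ ZMod n) : V ≃ ZMod n :=
  L.foldl (fun τ i => toggle G i τ) σ

noncomputable def tpro {V : Type*} {n : ℕ} (G : SimpleGraph V) (π : Fin n ≃ ZMod n)
    (σ : V ≃ ZMod n) : V ≃ ZMod n :=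
  applyToggles G (List.ofFn fun k => π k) σ

def cycShift {V : Type*} {n : ℕ} (σ : V ≃ ZMod n) : V ≃ ZMod n :=
  σ.trans (Equiv.addRight (1 : ZMod n))

noncomputable def broList {n : ℕ} (B : Finset (ZMod n)) (c : ZMod n) : List (ZMod n) :=
  ((List.range n).map (fun j => c + 1 + (j : ZMod n))).filter (· ∈ B)

noncomputable def cycBro {V : Type*} {n : ℕ} (G : SimpleGraph V) (B : Finset (ZMod n))
    (c : ZMod n) (σ : V ≃ ZMod n) : V ≃ ZMod n :=
  cycShift (applyToggles G (broList B c) σ)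

def linExt {n : ℕ} (o : ZMod n → Bool) (π : Fin n ≃ ZMod n) : Prop :=
  ∀ a : ZMod n, if o a then π.symm a < π.symm (a + 1) else π.symm (a + 1) < π.symm a

lemma zmod_val_add_one {n : ℕ} [NeZero n] {x : ZMod n} (h : x ≠ -1) :
    (x + 1).val = x.val + 1 := by
  rcases n with _ | _ | m
  · exact absurd rfl (NeZero.ne 0)
  · exact absurd (Subsingleton.elim (α := ZMod 1) x (-1)) h
  · have hx : x.val ≠ m + 1 := by
      intro hv
      exact h (ZMod.val_injective _ (hv.trans (ZMod.val_neg_one (m + 1)).symm))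
    have hlt := ZMod.val_lt x
    have h1 : (1 : ZMod (m + 2)).val = 1 := by rw [ZMod.val_one_eq_one_mod]; exact Nat.mod_eq_of_lt (by omega)
    have hs : x.val + (1 : ZMod (m + 2)).val < m + 2 := by omega
    rw [ZMod.val_add_of_lt hs, h1]

lemma zmod_val_ne {n : ℕ} [NeZero n] {x y : ZMod n} (h : x ≠ y) : x.val ≠ y.val :=
  fun hv => h (ZMod.val_injective n hv)

section toggles
variable {V : Type*} {n : ℕ} (G : SimpleGraph V)

lemma applyToggles_cons (j : ZMod n) (L : List (ZMod n)) (σ : V ≃ ZMod n) :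
    applyToggles G (j :: L) σ = applyToggles G L (toggle G j σ) := rfl

lemma toggle_move (j : ZMod n) (σ : V ≃ ZMod n) (u : V) :
    toggle G j σ u = σ u ∨ (σ u = j ∧ toggle G j σ u = j + 1) ∨
      (σ u = j + 1 ∧ toggle G j σ u = j) := by
  by_cases h : G.Adj (σ.symm j) (σ.symm (j + 1))
  · left; rw [toggle, if_pos h]
  · rw [toggle, if_neg h]
    by_cases h1 : σ u = j
    · right; left; exact ⟨h1, by simp [Equiv.trans_apply, h1]⟩
    by_cases h2 : σ u = j + 1
    · right; right; exact ⟨h2, by simp [Equiv.trans_apply, h2]⟩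
    · left; simp [Equiv.trans_apply, Equiv.swap_apply_of_ne_of_ne h1 h2]

lemma toggle_not_both {j : ZMod n} {σ : V ≃ ZMod n} {u w : V} (huw : G.Adj u w) :
    toggle G j σ u = σ u ∨ toggle G j σ w = σ w := by
  by_contra hc
  push_neg at hc
  obtain ⟨hu, hw⟩ := hc
  by_cases h : G.Adj (σ.symm j) (σ.symm (j + 1))
  · rw [toggle, if_pos h] at hu; exact hu rfl
  · rw [toggle, if_neg h] at hu hw
    simp only [Equiv.trans_apply] at hu hw
    have hu' : σ u = j ∨ σ u = j + 1 := by
      by_contra h'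
      push_neg at h'
      exact hu (Equiv.swap_apply_of_ne_of_ne h'.1 h'.2)
    have hw' : σ w = j ∨ σ w = j + 1 := by
      by_contra h'
      push_neg at h'
      exact hw (Equiv.swap_apply_of_ne_of_ne h'.1 h'.2)
    have hne : σ u ≠ σ w := fun he => G.ne_of_adj huw (σ.injective he)
    apply h
    rcases hu' with h1 | h1 <;> rcases hw' with h2 | h2
    · exact absurd (h1.trans h2.symm) hne
    · have e1 : σ.symm j = u := by rw [← h1, Equiv.symm_apply_apply]
      have e2 : σ.symm (j + 1) = w := by rw [← h2, Equiv.symm_apply_apply]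
      rw [e1, e2]; exact huw
    · have e1 : σ.symm j = w := by rw [← h2, Equiv.symm_apply_apply]
      have e2 : σ.symm (j + 1) = u := by rw [← h1, Equiv.symm_apply_apply]
      rw [e1, e2]; exact huw.symm
    · exact absurd (h1.trans h2.symm) hne

lemma toggle_val_move [NeZero n] (i : ZMod n) {j : ZMod n} (hj : j ≠ i - 1)
    (σ : V ≃ ZMod n) (u : V) :
    ((toggle G j σ) u - i).val = (σ u - i).val ∨
    ((toggle G j σ u - i).val = (σ u - i).val + 1) ∨
    ((σ u - i).val = (toggle G j σ u - i).val + 1) := by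
  have hji : (j - i : ZMod n) ≠ -1 := by
    intro hc
    apply hj
    linear_combination hc
  have he : (j + 1 - i : ZMod n) = (j - i) + 1 := by ring
  rcases toggle_move G j σ u with h | ⟨h1, h2⟩ | ⟨h1, h2⟩
  · left; rw [h]
  · right; left
    rw [h1, h2, he]
    exact zmod_val_add_one hji
  · right; right
    rw [h1, h2, he]
    exact zmod_val_add_one hji

lemma toggle_lt [NeZero n] (i : ZMod n) {j : ZMod n} (hj : j ≠ i - 1) {σ : V ≃ ZMod n}
    {u w : V} (huw : G.Adj u w)
    (h : (σ u - i).val < (σ w - i).val) :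
    ((toggle G j σ) u - i).val < ((toggle G j σ) w - i).val := by
  have hne : toggle G j σ u ≠ toggle G j σ w :=
    (toggle G j σ).injective.ne (G.ne_of_adj huw)
  have hnev : (toggle G j σ u - i).val ≠ (toggle G j σ w - i).val := by
    refine zmod_val_ne fun hc => hne ?_
    rwa [sub_left_inj] at hc
  have h0' : (toggle G j σ u - i).val = (σ u - i).val ∨
      (toggle G j σ w - i).val = (σ w - i).val := by
    rcases toggle_not_both G huw (j := j) (σ := σ) with h0 | h0
    · left; rw [h0]
    · right; rw [h0]
  rcases toggle_val_move G i hj σ u with h1 | h1 | h1 <;>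
    rcases toggle_val_move G i hj σ w with h2 | h2 | h2 <;>
    rcases h0' with h0 | h0 <;> omega

lemma applyToggles_lt [NeZero n] (i : ZMod n) {L : List (ZMod n)}
    (hL : ∀ j ∈ L, j ≠ i - 1) {σ : V ≃ ZMod n} {u w : V} (huw : G.Adj u w)
    (h : (σ u - i).val < (σ w - i).val) :
    ((applyToggles G L σ) u - i).val < ((applyToggles G L σ) w - i).val := by
  induction L generalizing σ with
  | nil => exact h
  | cons j L ih =>
    rw [applyToggles_cons]
    exact ih (fun a ha => hL a (List.mem_cons_of_mem _ ha))
      (toggle_lt G i (hL j List.mem_cons_self) huw h)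

lemma broList_ne {B : Finset (ZMod n)} {c : ZMod n} (hB : c ∉ B) :
    ∀ j ∈ broList B c, j ≠ c := by
  intro j hj
  rw [broList, List.mem_filter] at hj
  intro hc
  rw [hc] at hj
  exact hB (by simpa using hj.2)

lemma cyc_val_step [NeZero n] (i : ZMod n) (ρ : V ≃ ZMod n) (u : V) :
    ((cycShift ρ u - i).val : ℤ)
      = ((ρ u - i).val : ℤ) + 1 - n * (if cycShift ρ u = i then 1 else 0) := by
  have hc : cycShift ρ u = ρ u + 1 := rfl
  by_cases h : ρ u = i - 1
  · have hi : cycShift ρ u = i := by rw [hc, h]; ring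
    rw [if_pos hi, hi]
    have hv : ((ρ u - i) : ZMod n) = -1 := by rw [h]; ring
    rw [hv]
    obtain ⟨m, rfl⟩ := Nat.exists_eq_succ_of_ne_zero (NeZero.ne n)
    rw [ZMod.val_neg_one]
    simp only [sub_self, ZMod.val_zero, mul_one]
    push_cast
    ring
  · have h2 : cycShift ρ u ≠ i := by
      rw [hc]; intro hc2; exact h (by linear_combination hc2)
    rw [if_neg h2, hc]
    have he : (ρ u + 1 - i : ZMod n) = (ρ u - i) + 1 := by ring
    have hne : (ρ u - i : ZMod n) ≠ -1 := by
      intro hc3; exact h (by linear_combination hc3)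
    rw [he, zmod_val_add_one hne]
    push_cast
    ring

end toggles

lemma int_band {n X : ℤ} (hn : 0 < n) (h1 : -n < n * X) (h2 : n * X < n) : X = 0 := by
  rcases lt_trichotomy X 0 with h | h | h
  · have hx : X ≤ -1 := by omega
    have := mul_le_mul_of_nonneg_left hx hn.le
    rw [mul_neg_one] at this
    omega
  · exact h
  · have hx : (1 : ℤ) ≤ X := h
    have := mul_le_mul_of_nonneg_left hx hn.le
    rw [mul_one] at this
    omega

lemma int_band1 {n X : ℤ} (hn : 0 < n) (h1 : 0 < n * X) (h2 : n * X < 2 * n) : X = 1 := by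
  have := int_band hn (show -n < n * (X - 1) by rw [mul_sub]; omega)
    (show n * (X - 1) < n by rw [mul_sub]; omega)
  omega

lemma shift_count (p : ℕ) (hp : 0 < p) (Q : ℕ → Prop) (hQ : Q p ↔ Q 0) :
    ((Finset.range p).filter (fun s => Q (s + 1))).card
      = ((Finset.range p).filter Q).card := by
  apply Finset.card_bij (fun s _ => (s + 1) % p)
  · intro s hs
    simp only [Finset.mem_filter, Finset.mem_range] at hs ⊢
    refine ⟨Nat.mod_lt _ hp, ?_⟩
    rcases eq_or_ne (s + 1) p with h | h
    · rw [h, Nat.mod_self]; exact hQ.mp (h ▸ hs.2)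
    · rw [Nat.mod_eq_of_lt (by omega)]; exact hs.2
  · intro a ha b hb hab
    simp only [Finset.mem_filter, Finset.mem_range] at ha hb
    have ha1 : (a + 1) % p = if a + 1 = p then 0 else a + 1 := by
      split_ifs with h
      · rw [h, Nat.mod_self]
      · exact Nat.mod_eq_of_lt (by omega)
    have hb1 : (b + 1) % p = if b + 1 = p then 0 else b + 1 := by
      split_ifs with h
      · rw [h, Nat.mod_self]
      · exact Nat.mod_eq_of_lt (by omega)
    rw [ha1, hb1] at hab
    split_ifs at hab <;> omega
  · intro b hb
    simp only [Finset.mem_filter, Finset.mem_range] at hb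
    rcases eq_or_ne b 0 with rfl | h
    · refine ⟨p - 1, ?_, ?_⟩
      · simp only [Finset.mem_filter, Finset.mem_range]
        refine ⟨by omega, ?_⟩
        rw [show p - 1 + 1 = p by omega]
        exact hQ.mpr hb.2
      · rw [show p - 1 + 1 = p by omega, Nat.mod_self]
    · refine ⟨b - 1, ?_, ?_⟩
      · simp only [Finset.mem_filter, Finset.mem_range]
        refine ⟨by omega, ?_⟩
        rw [show b - 1 + 1 = b by omega]
        exact hb.2
      · rw [show b - 1 + 1 = b by omega, Nat.mod_eq_of_lt hb.1]

lemma card_filter_irrel {α : Type*} (p : α → Prop) (s : Finset α)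
    (h1 h2 : DecidablePred p) :
    (@Finset.filter α p h1 s).card = (@Finset.filter α p h2 s).card := by
  cases Subsingleton.elim h1 h2
  rfl

theorem stmt7 {V : Type*} [Fintype V] (n : ℕ) (hcard : Fintype.card V = n)
    (G : SimpleGraph V) (hconn : G.Connected) (v : V) (i : ZMod n)
    (B : Finset (ZMod n)) (hB : i - 1 ∉ B) (σ₀ : V ≃ ZMod n) :
    n * ((Finset.range (Function.minimalPeriod (cycBro G B (i - 1)) σ₀)).filter
          (fun k => ((cycBro G B (i - 1))^[k] σ₀) v = i)).card
      = Function.minimalPeriod (cycBro G B (i - 1)) σ₀ := by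
  set Φ := cycBro G B (i - 1) with hΦdef
  set p := Function.minimalPeriod Φ σ₀ with hpdef
  rcases Nat.eq_zero_or_pos p with hp0 | hp0
  · rw [hp0]; simp
  have hn0 : n ≠ 0 := by
    rintro rfl
    have hV : IsEmpty V := Fintype.card_eq_zero_iff.mp hcard
    exact hV.false (σ₀.symm 0)
  haveI : NeZero n := ⟨hn0⟩
  have hnpos : (0 : ℤ) < n := by exact_mod_cast Nat.pos_of_ne_zero hn0
  have hper : Φ^[p] σ₀ = σ₀ := Function.iterate_minimalPeriod
  have hL : ∀ j ∈ broList B (i - 1), j ≠ i - 1 := broList_ne hB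
  set C : V → ℕ := fun u =>
    ((Finset.range p).filter (fun s => (Φ^[s + 1] σ₀) u = i)).card with hCdef
  have hit : ∀ t : ℕ, Φ^[t + 1] σ₀
      = cycShift (applyToggles G (broList B (i - 1)) (Φ^[t] σ₀)) := by
    intro t
    rw [Function.iterate_succ_apply']
    rfl
  have key : ∀ u w : V, G.Adj u w →
      ((σ₀ u - i).val < (σ₀ w - i).val) → C u = C w := by
    intro u w hadj hlt
    have hEne : ∀ t : ℕ, ((Φ^[t] σ₀) u - i).val ≠ ((Φ^[t] σ₀) w - i).val := by
      intro t
      refine zmod_val_ne fun hc => ?_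
      rw [sub_left_inj] at hc
      exact G.ne_of_adj hadj ((Φ^[t] σ₀).injective hc)
    set E : ℕ → V → ℤ := fun t x => (((Φ^[t] σ₀) x - i).val : ℤ) with hEdef
    set Cz : ℕ → V → ℤ := fun t x =>
      (((Finset.range t).filter (fun s => (Φ^[s + 1] σ₀) x = i)).card : ℤ) with hCzdef
    have hEval : ∀ t x, E t x = (((Φ^[t] σ₀) x - i).val : ℤ) := fun _ _ => rfl
    have hEbd : ∀ t x, 0 ≤ E t x ∧ E t x < n := by
      intro t x
      rw [hEval]
      constructor
      · exact Int.natCast_nonneg _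
      · exact_mod_cast ZMod.val_lt _
    have hCzstep : ∀ t x, Cz (t + 1) x
        = Cz t x + (if (Φ^[t + 1] σ₀) x = i then 1 else 0) := by
      intro t x
      simp only [hCzdef, Finset.range_add_one, Finset.filter_insert]
      split_ifs with h
      · rw [Finset.card_insert_of_notMem (fun hm => lt_irrefl t (Finset.mem_range.mp (Finset.mem_of_mem_filter t hm)))]
        push_cast
        ring
      · simp
    have hEstep : ∀ t x, E (t + 1) x
        = (((applyToggles G (broList B (i - 1)) (Φ^[t] σ₀)) x - i).val : ℤ)
          + 1 - n * (if (Φ^[t + 1] σ₀) x = i then 1 else 0) := by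
      intro t x
      simp only [hEdef]
      rw [hit t]
      exact cyc_val_step i _ x
    have main : ∀ t : ℕ,
        0 < n * (Cz t w - Cz t u) + (E t w - E t u)
        ∧ n * (Cz t w - Cz t u) + (E t w - E t u) < n := by
      intro t
      induction t with
      | zero =>
        have h0u : Cz 0 u = 0 := by simp [hCzdef]; rfl
        have h0w : Cz 0 w = 0 := by simp [hCzdef]; rfl
        have hE0u : E 0 u = ((σ₀ u - i).val : ℤ) := by simp [hEdef]
        have hE0w : E 0 w = ((σ₀ w - i).val : ℤ) := by simp [hEdef]
        have hlt' : ((σ₀ u - i).val : ℤ) < ((σ₀ w - i).val : ℤ) := by exact_mod_cast hlt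
        have hbu := hEbd 0 u
        have hbw := hEbd 0 w
        rw [h0u, h0w, hE0u, hE0w]
        rw [hE0u] at hbu
        rw [hE0w] at hbw
        constructor
        · linarith [hbu.1]
        · linarith [hbw.2, hbu.1]
      | succ t ih =>
        have hFbd : ∀ x : V,
            (0 : ℤ) ≤ (((applyToggles G (broList B (i - 1)) (Φ^[t] σ₀)) x - i).val : ℤ)
            ∧ (((applyToggles G (broList B (i - 1)) (Φ^[t] σ₀)) x - i).val : ℤ) < n := by
          intro x
          constructor
          · exact Int.natCast_nonneg _
          · exact_mod_cast ZMod.val_lt _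
        have hD : n * (Cz (t + 1) w - Cz (t + 1) u) + (E (t + 1) w - E (t + 1) u)
            = n * (Cz t w - Cz t u)
              + ((((applyToggles G (broList B (i - 1)) (Φ^[t] σ₀)) w - i).val : ℤ)
                - (((applyToggles G (broList B (i - 1)) (Φ^[t] σ₀)) u - i).val : ℤ)) := by
          rw [hCzstep t u, hCzstep t w, hEstep t u, hEstep t w]
          ring
        have hsignuw : E t u < E t w →
            (((applyToggles G (broList B (i - 1)) (Φ^[t] σ₀)) u - i).val : ℤ)
              < (((applyToggles G (broList B (i - 1)) (Φ^[t] σ₀)) w - i).val : ℤ) := by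
          intro hlt'
          rw [hEval, hEval] at hlt'
          have h1 : ((Φ^[t] σ₀) u - i).val < ((Φ^[t] σ₀) w - i).val := by
            exact_mod_cast hlt'
          exact_mod_cast applyToggles_lt G i hL hadj h1
        have hsignwu : E t w < E t u →
            (((applyToggles G (broList B (i - 1)) (Φ^[t] σ₀)) w - i).val : ℤ)
              < (((applyToggles G (broList B (i - 1)) (Φ^[t] σ₀)) u - i).val : ℤ) := by
          intro hlt'
          rw [hEval, hEval] at hlt'
          have h1 : ((Φ^[t] σ₀) w - i).val < ((Φ^[t] σ₀) u - i).val := by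
            exact_mod_cast hlt'
          exact_mod_cast applyToggles_lt G i hL hadj.symm h1
        have hneZ : E t u ≠ E t w := by
          rw [hEval, hEval]
          intro hc
          exact hEne t (by exact_mod_cast hc)
        have hbu := hEbd t u
        have hbw := hEbd t w
        have hFu := hFbd u
        have hFw := hFbd w
        rw [hD]
        rcases lt_or_gt_of_ne hneZ with hlt' | hgt'
        · have hX : Cz t w - Cz t u = 0 :=
            int_band hnpos (by linarith [ih.1, ih.2]) (by linarith [ih.1, ih.2])
          have hF := hsignuw hlt'
          rw [hX]
          constructor
          · linarith
          · linarith
        · have hX : Cz t w - Cz t u = 1 :=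
            int_band1 hnpos (by linarith [ih.1, ih.2]) (by linarith [ih.1, ih.2])
          have hF := hsignwu hgt'
          rw [hX]
          constructor
          · linarith
          · linarith
    have hmp := main p
    have hEpu : E p u = ((σ₀ u - i).val : ℤ) := by simp [hEdef, hper]
    have hEpw : E p w = ((σ₀ w - i).val : ℤ) := by simp [hEdef, hper]
    have hlt' : ((σ₀ u - i).val : ℤ) < ((σ₀ w - i).val : ℤ) := by exact_mod_cast hlt
    have hbu : (0 : ℤ) ≤ ((σ₀ u - i).val : ℤ) := Int.natCast_nonneg _
    have hbw : ((σ₀ w - i).val : ℤ) < n := by exact_mod_cast ZMod.val_lt _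
    rw [hEpu, hEpw] at hmp
    have hX : Cz p w - Cz p u = 0 :=
      int_band hnpos (by linarith [hmp.1, hmp.2]) (by linarith [hmp.1, hmp.2])
    have hCu : (C u : ℤ) = Cz p u := by simp [hCdef, hCzdef]
    have hCw : (C w : ℤ) = Cz p w := by simp [hCdef, hCzdef]
    have : (C u : ℤ) = (C w : ℤ) := by omega
    exact_mod_cast this
  have adjEq : ∀ u w : V, G.Adj u w → C u = C w := by
    intro u w hadj
    rcases Nat.lt_trichotomy ((σ₀ u - i).val) ((σ₀ w - i).val) with h | h | h
    · exact key u w hadj h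
    · exfalso
      have h2 : σ₀ u - i = σ₀ w - i := ZMod.val_injective _ h
      rw [sub_left_inj] at h2
      exact G.ne_of_adj hadj (σ₀.injective h2)
    · exact (key w u hadj.symm h).symm
  have reachEq : ∀ u w : V, G.Walk u w → C u = C w := by
    intro u w walk
    induction walk with
    | nil => rfl
    | cons h _ ih => exact (adjEq _ _ h).trans ih
  have hconst : ∀ x : V, C x = C v := fun x => reachEq x v (hconn.preconnected x v).some
  have hsum : ∑ x : V, C x = p := by
    calc ∑ x : V, C x
        = ∑ x : V, ∑ s ∈ Finset.range p, (if (Φ^[s + 1] σ₀) x = i then 1 else 0) := by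
          refine Finset.sum_congr rfl fun x _ => ?_
          rw [hCdef]
          exact Finset.card_filter _ _
      _ = ∑ s ∈ Finset.range p, ∑ x : V, (if (Φ^[s + 1] σ₀) x = i then 1 else 0) :=
          Finset.sum_comm
      _ = ∑ s ∈ Finset.range p, 1 := by
          refine Finset.sum_congr rfl fun s _ => ?_
          rw [← Finset.card_filter]
          have hs : Finset.univ.filter (fun x => (Φ^[s + 1] σ₀) x = i)
              = {(Φ^[s + 1] σ₀).symm i} := by
            ext x
            simp only [Finset.mem_filter, Finset.mem_univ, true_and, Finset.mem_singleton]
            exact Equiv.apply_eq_iff_eq_symm_apply _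
          rw [hs]
          simp
      _ = p := by simp
  have hshift : ((Finset.range p).filter (fun k => (Φ^[k] σ₀) v = i)).card = C v := by
    have h := (shift_count p hp0 (fun k => (Φ^[k] σ₀) v = i) (by simp [hper])).symm
    rw [hCdef]
    exact (card_filter_irrel _ _ _ _).trans (h.trans (card_filter_irrel _ _ _ _))
  calc n * ((Finset.range p).filter (fun k => (Φ^[k] σ₀) v = i)).card
      = n * C v := by rw [hshift]
    _ = ∑ _x : V, C v := by rw [Finset.sum_const, Finset.card_univ, hcard, smul_eq_mul]
    _ = ∑ x : V, C x := Finset.sum_congr rfl fun x _ => (hconst x).symm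
    _ = p := hsum
end

section
/- Let G be a connected graph with n vertices, B ⊆ ℤ/nℤ with i-1 ∉ B for some fixed i ∈ ℤ/nℤ. Then every orbit of the map cyc∘Bro_B on the set Λ_G of labelings of G has size divisible by n. -/
open scoped Classical

set_option linter.unusedSectionVars false
set_option linter.unusedVariables false
set_option maxHeartbeats 1000000

/-! ### Auxiliary machinery: integer lifts of labelings -/

lemma band_step {N d d' : ℤ} (hc : d' = d ∨ d' = d + 1 ∨ d' = d - 1)
    (nd : ¬ N ∣ d) (nd' : ¬ N ∣ d') (k : ℤ) : k * N < d' ↔ k * N < d := by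
  rcases hc with h | h | h
  · rw [h]
  · subst h
    constructor
    · intro hk
      rcases lt_or_eq_of_le (by omega : k * N ≤ d) with h' | h'
      · exact h'
      · exact absurd ⟨k, by rw [← h']; ring⟩ nd
    · intro hk; omega
  · subst h
    constructor
    · intro hk; omega
    · intro hk
      rcases lt_or_eq_of_le (by omega : k * N ≤ d - 1) with h' | h'
      · exact h'
      · exact absurd ⟨k, by rw [← h']; ring⟩ nd'

lemma eq_of_band {N d0 dT : ℤ} (hN : 0 < N) (hdvd : N ∣ dT - d0) (hnd0 : ¬ N ∣ d0)
    (hband : ∀ k : ℤ, k * N < dT ↔ k * N < d0) : dT = d0 := by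
  obtain ⟨t, ht⟩ := hdvd
  have h0 : N * (d0 / N) + d0 % N = d0 := Int.mul_ediv_add_emod d0 N
  have h1 : 0 ≤ d0 % N := Int.emod_nonneg d0 hN.ne'
  have h2 : d0 % N < N := Int.emod_lt_of_pos d0 hN
  have h3 : d0 % N ≠ 0 := fun h => hnd0 (Int.dvd_of_emod_eq_zero h)
  set q := d0 / N with hq
  have hlow : q * N < d0 := by rw [mul_comm]; omega
  have hup : ¬ ((q + 1) * N < d0) := by
    have : (q + 1) * N = N * q + N := by ring
    rw [this]; omega
  have hlowT : q * N < dT := (hband q).2 hlow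
  have hupT : dT ≤ (q + 1) * N := le_of_not_gt (fun h => hup ((hband (q + 1)).1 h))
  have hq1 : (q + 1) * N = N * q + N := by ring
  have hA : N * t < N * 1 := by nlinarith [hlow, hupT, ht]
  have hB : N * (-1) < N * t := by nlinarith
  have ht1 : t < 1 := lt_of_mul_lt_mul_left hA hN.le
  have ht2 : -1 < t := lt_of_mul_lt_mul_left hB hN.le
  have : t = 0 := by omega
  rw [this] at ht; omega

section Aux
variable {V : Type*} [Fintype V] {n : ℕ}

noncomputable def ptoggle (G : SimpleGraph V) (j : ZMod n) (σ : V ≃ ZMod n) (p : V → ℤ) :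
    V → ℤ :=
  if G.Adj (σ.symm j) (σ.symm (j + 1)) then p
  else fun v => if σ v = j then p v + 1 else if σ v = j + 1 then p v - 1 else p v

noncomputable def pstepL (G : SimpleGraph V) (L : List (ZMod n))
    (s : (V ≃ ZMod n) × (V → ℤ)) : (V ≃ ZMod n) × (V → ℤ) :=
  L.foldl (fun s j => (toggle G j s.1, ptoggle G j s.1 s.2)) s

noncomputable def pfull (G : SimpleGraph V) (B : Finset (ZMod n)) (c : ZMod n)
    (s : (V ≃ ZMod n) × (V → ℤ)) : (V ≃ ZMod n) × (V → ℤ) :=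
  (cycShift (pstepL G (broList B c) s).1, fun v => (pstepL G (broList B c) s).2 v + 1)

def Good (σ : V ≃ ZMod n) (p : V → ℤ) : Prop := ∀ v, ((p v : ℤ) : ZMod n) = σ v

lemma pstepL_fst (G : SimpleGraph V) (L : List (ZMod n)) :
    ∀ s : (V ≃ ZMod n) × (V → ℤ), (pstepL G L s).1 = applyToggles G L s.1 := by
  induction L with
  | nil => intro s; rfl
  | cons j L ih =>
      intro s
      rw [pstepL, List.foldl_cons, applyToggles, List.foldl_cons]
      exact ih (toggle G j s.1, ptoggle G j s.1 s.2)

lemma pfull_fst (G : SimpleGraph V) (B : Finset (ZMod n)) (c : ZMod n)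
    (s : (V ≃ ZMod n) × (V → ℤ)) : (pfull G B c s).1 = cycBro G B c s.1 := by
  rw [pfull, cycBro, pstepL_fst]

lemma iter_fst (G : SimpleGraph V) (B : Finset (ZMod n)) (c : ZMod n) :
    ∀ (m : ℕ) (s : (V ≃ ZMod n) × (V → ℤ)),
      ((pfull G B c)^[m] s).1 = (cycBro G B c)^[m] s.1 := by
  intro m
  induction m with
  | zero => intro s; rfl
  | succ m ih =>
      intro s
      rw [Function.iterate_succ_apply, Function.iterate_succ_apply, ih, pfull_fst]

lemma good_ptoggle (G : SimpleGraph V) (j : ZMod n) {σ : V ≃ ZMod n} {p : V → ℤ}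
    (hg : Good σ p) : Good (toggle G j σ) (ptoggle G j σ p) := by
  intro v
  rw [toggle, ptoggle]
  by_cases hadj : G.Adj (σ.symm j) (σ.symm (j + 1))
  · simp only [if_pos hadj]; exact hg v
  · simp only [if_neg hadj, Equiv.trans_apply]
    by_cases h1 : σ v = j
    · simp [h1, hg v, Equiv.swap_apply_left]
    · by_cases h2 : σ v = j + 1
      · rw [if_neg h1, if_pos h2, h2, Equiv.swap_apply_right]
        push_cast
        rw [hg v, h2]
        ring
      · simp [h1, h2, Equiv.swap_apply_of_ne_of_ne h1 h2, hg v]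

lemma good_pstepL (G : SimpleGraph V) (L : List (ZMod n)) :
    ∀ s : (V ≃ ZMod n) × (V → ℤ), Good s.1 s.2 → Good (pstepL G L s).1 (pstepL G L s).2 := by
  induction L with
  | nil => intro s h; exact h
  | cons j L ih =>
      intro s h
      rw [pstepL, List.foldl_cons]
      exact ih (toggle G j s.1, ptoggle G j s.1 s.2) (good_ptoggle G j h)

lemma good_pfull (G : SimpleGraph V) (B : Finset (ZMod n)) (c : ZMod n)
    {s : (V ≃ ZMod n) × (V → ℤ)} (h : Good s.1 s.2) :
    Good (pfull G B c s).1 (pfull G B c s).2 := by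
  intro v
  have := good_pstepL G (broList B c) s h v
  simp only [pfull, cycShift, Equiv.trans_apply, Equiv.coe_addRight]
  push_cast
  rw [this]

lemma good_iter (G : SimpleGraph V) (B : Finset (ZMod n)) (c : ZMod n) :
    ∀ (m : ℕ) (s : (V ≃ ZMod n) × (V → ℤ)), Good s.1 s.2 →
      Good ((pfull G B c)^[m] s).1 ((pfull G B c)^[m] s).2 := by
  intro m
  induction m with
  | zero => intro s h; exact h
  | succ m ih =>
      intro s h
      rw [Function.iterate_succ_apply]
      exact ih _ (good_pfull G B c h)

lemma not_dvd_of_good {σ : V ≃ ZMod n} {p : V → ℤ} (hg : Good σ p) {u v : V} (huv : u ≠ v) :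
    ¬ (n : ℤ) ∣ (p u - p v) := by
  intro hdvd
  have h0 : ((p u - p v : ℤ) : ZMod n) = 0 := (ZMod.intCast_zmod_eq_zero_iff_dvd _ n).2 hdvd
  push_cast at h0
  rw [hg u, hg v, sub_eq_zero] at h0
  exact huv (σ.injective h0)

lemma steps_ptoggle (G : SimpleGraph V) (j : ZMod n) {σ : V ≃ ZMod n} (p : V → ℤ)
    {u v : V} (hadj : G.Adj u v) :
    ptoggle G j σ p u - ptoggle G j σ p v = p u - p v ∨
    ptoggle G j σ p u - ptoggle G j σ p v = p u - p v + 1 ∨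
    ptoggle G j σ p u - ptoggle G j σ p v = p u - p v - 1 := by
  rw [ptoggle]
  by_cases hA : G.Adj (σ.symm j) (σ.symm (j + 1))
  · simp [hA]
  · simp only [if_neg hA]
    have hne : u ≠ v := hadj.ne
    by_cases h1 : σ u = j
    · by_cases h3 : σ v = j
      · exact absurd (σ.injective (h1.trans h3.symm)) hne
      · by_cases h4 : σ v = j + 1
        · exfalso
          apply hA
          have e1 : σ.symm j = u := by rw [Equiv.symm_apply_eq]; exact h1.symm
          have e2 : σ.symm (j + 1) = v := by rw [Equiv.symm_apply_eq]; exact h4.symm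
          rw [e1, e2]; exact hadj
        · right; left; rw [if_pos h1, if_neg h3, if_neg h4]; ring
    · by_cases h2 : σ u = j + 1
      · by_cases h3 : σ v = j
        · exfalso
          apply hA
          have e1 : σ.symm j = v := by rw [Equiv.symm_apply_eq]; exact h3.symm
          have e2 : σ.symm (j + 1) = u := by rw [Equiv.symm_apply_eq]; exact h2.symm
          rw [e1, e2]; exact hadj.symm
        · by_cases h4 : σ v = j + 1
          · exact absurd (σ.injective (h2.trans h4.symm)) hne
          · right; right; rw [if_neg h1, if_pos h2, if_neg h3, if_neg h4]; ring
      · by_cases h3 : σ v = j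
        · right; right; rw [if_neg h1, if_neg h2, if_pos h3]; ring
        · by_cases h4 : σ v = j + 1
          · right; left; rw [if_neg h1, if_neg h2, if_neg h3, if_pos h4]; ring
          · left; rw [if_neg h1, if_neg h2, if_neg h3, if_neg h4]

lemma band_ptoggle (G : SimpleGraph V) (j : ZMod n) {σ : V ≃ ZMod n} {p : V → ℤ}
    (hg : Good σ p) {u v : V} (hadj : G.Adj u v) (k : ℤ) :
    k * n < ptoggle G j σ p u - ptoggle G j σ p v ↔ k * n < p u - p v :=
  band_step (steps_ptoggle G j p hadj) (not_dvd_of_good hg hadj.ne)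
    (not_dvd_of_good (good_ptoggle G j hg) hadj.ne) k

lemma band_pstepL (G : SimpleGraph V) (L : List (ZMod n)) :
    ∀ (s : (V ≃ ZMod n) × (V → ℤ)), Good s.1 s.2 → ∀ {u v : V}, G.Adj u v → ∀ k : ℤ,
      (k * n < (pstepL G L s).2 u - (pstepL G L s).2 v ↔ k * n < s.2 u - s.2 v) := by
  induction L with
  | nil => intro s h u v hadj k; exact Iff.rfl
  | cons j L ih =>
      intro s h u v hadj k
      rw [pstepL, List.foldl_cons]
      exact ((ih (toggle G j s.1, ptoggle G j s.1 s.2) (good_ptoggle G j h) hadj k).trans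
        (band_ptoggle G j h hadj k))

lemma band_pfull (G : SimpleGraph V) (B : Finset (ZMod n)) (c : ZMod n)
    {s : (V ≃ ZMod n) × (V → ℤ)} (h : Good s.1 s.2) {u v : V} (hadj : G.Adj u v) (k : ℤ) :
    (k * n < (pfull G B c s).2 u - (pfull G B c s).2 v ↔ k * n < s.2 u - s.2 v) := by
  have : (pfull G B c s).2 u - (pfull G B c s).2 v
      = (pstepL G (broList B c) s).2 u - (pstepL G (broList B c) s).2 v := by
    simp [pfull]
  rw [this]
  exact band_pstepL G (broList B c) s h hadj k

lemma band_iter (G : SimpleGraph V) (B : Finset (ZMod n)) (c : ZMod n) :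
    ∀ (m : ℕ) (s : (V ≃ ZMod n) × (V → ℤ)), Good s.1 s.2 → ∀ {u v : V}, G.Adj u v →
    ∀ k : ℤ,
      (k * n < ((pfull G B c)^[m] s).2 u - ((pfull G B c)^[m] s).2 v ↔
        k * n < s.2 u - s.2 v) := by
  intro m
  induction m with
  | zero => intro s h u v hadj k; exact Iff.rfl
  | succ m ih =>
      intro s h u v hadj k
      rw [Function.iterate_succ_apply]
      exact (ih _ (good_pfull G B c h) hadj k).trans (band_pfull G B c h hadj k)

lemma sum_ptoggle (hn : 2 ≤ n) (G : SimpleGraph V) (j : ZMod n) (σ : V ≃ ZMod n) (p : V → ℤ) :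
    ∑ v, ptoggle G j σ p v = ∑ v, p v := by
  haveI : Fact (1 < n) := ⟨hn⟩
  rw [ptoggle]
  by_cases hA : G.Adj (σ.symm j) (σ.symm (j + 1))
  · rw [if_pos hA]
  · rw [if_neg hA]
    have hne : j ≠ j + 1 := by simp
    have key : ∀ v, (if σ v = j then p v + 1 else if σ v = j + 1 then p v - 1 else p v)
        = p v + ((if v = σ.symm j then (1:ℤ) else 0)
          - (if v = σ.symm (j+1) then (1:ℤ) else 0)) := by
      intro v
      by_cases h1 : σ v = j
      · have hv : v = σ.symm j := by rw [Equiv.eq_symm_apply]; exact h1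
        have hv' : v ≠ σ.symm (j+1) := by
          rw [Ne, Equiv.eq_symm_apply]; rw [h1]; exact hne
        rw [if_pos h1, if_pos hv, if_neg hv']
        ring
      · by_cases h2 : σ v = j + 1
        · have hv : v = σ.symm (j+1) := by rw [Equiv.eq_symm_apply]; exact h2
          have hv' : v ≠ σ.symm j := by rw [Ne, Equiv.eq_symm_apply]; exact h1
          rw [if_neg h1, if_pos h2, if_neg hv', if_pos hv]
          ring
        · have hv : v ≠ σ.symm j := by rw [Ne, Equiv.eq_symm_apply]; exact h1
          have hv' : v ≠ σ.symm (j+1) := by rw [Ne, Equiv.eq_symm_apply]; exact h2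
          rw [if_neg h1, if_neg h2, if_neg hv, if_neg hv']
          ring
    calc ∑ v, _ = ∑ v, (p v + ((if v = σ.symm j then (1:ℤ) else 0)
          - (if v = σ.symm (j+1) then (1:ℤ) else 0))) := Finset.sum_congr rfl (fun v _ => key v)
      _ = ∑ v, p v := by
          rw [Finset.sum_add_distrib, Finset.sum_sub_distrib,
            Finset.sum_ite_eq' Finset.univ (σ.symm j) (fun _ => (1:ℤ)),
            Finset.sum_ite_eq' Finset.univ (σ.symm (j+1)) (fun _ => (1:ℤ))]
          simp

lemma sum_pstepL (hn : 2 ≤ n) (G : SimpleGraph V) (L : List (ZMod n)) :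
    ∀ s : (V ≃ ZMod n) × (V → ℤ), ∑ v, (pstepL G L s).2 v = ∑ v, s.2 v := by
  induction L with
  | nil => intro s; rfl
  | cons j L ih =>
      intro s
      rw [pstepL, List.foldl_cons]
      exact (ih (toggle G j s.1, ptoggle G j s.1 s.2)).trans (sum_ptoggle hn G j s.1 s.2)

lemma sum_pfull (hn : 2 ≤ n) (G : SimpleGraph V) (B : Finset (ZMod n)) (c : ZMod n)
    (s : (V ≃ ZMod n) × (V → ℤ)) :
    ∑ v, (pfull G B c s).2 v = ∑ v, s.2 v + (Fintype.card V : ℤ) := by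
  simp only [pfull]
  rw [Finset.sum_add_distrib, sum_pstepL hn G (broList B c) s, Finset.sum_const,
    Finset.card_univ, nsmul_eq_mul, mul_one]

lemma sum_iter (hn : 2 ≤ n) (G : SimpleGraph V) (B : Finset (ZMod n)) (c : ZMod n) :
    ∀ (m : ℕ) (s : (V ≃ ZMod n) × (V → ℤ)),
      ∑ v, ((pfull G B c)^[m] s).2 v = ∑ v, s.2 v + (m : ℤ) * (Fintype.card V : ℤ) := by
  intro m
  induction m with
  | zero => intro s; simp
  | succ m ih =>
      intro s
      rw [Function.iterate_succ_apply, ih (pfull G B c s), sum_pfull hn G B c s]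
      push_cast
      ring

end Aux

theorem stmt8 {V : Type*} [Fintype V] (n : ℕ) (hcard : Fintype.card V = n)
    (G : SimpleGraph V) (hconn : G.Connected) (i : ZMod n)
    (B : Finset (ZMod n)) (hB : i - 1 ∉ B) (σ : V ≃ ZMod n) :
    n ∣ Function.minimalPeriod (cycBro G B (i - 1)) σ := by
  rcases Nat.lt_or_ge n 2 with hn | hn
  · interval_cases n
    · exact (Fintype.card_eq_zero_iff.mp hcard).elim (σ.symm 0)
    · exact one_dvd _
  · haveI : NeZero n := ⟨by omega⟩
    set f := cycBro G B (i - 1) with hf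
    set m := Function.minimalPeriod f σ with hm
    have hper : f^[m] σ = σ := Function.iterate_minimalPeriod
    set p0 : V → ℤ := fun v => ((σ v).val : ℤ) with hp0
    have hg0 : Good σ p0 := by
      intro v
      simp only [hp0]
      push_cast
      rw [ZMod.natCast_val, ZMod.cast_id]
    set F := pfull G B (i - 1) with hF
    set sT := F^[m] (σ, p0) with hsT
    have hfst : sT.1 = σ := by
      rw [hsT, hF, iter_fst G B (i - 1) m (σ, p0)]
      exact hper
    have hgT : Good sT.1 sT.2 := good_iter G B (i - 1) m (σ, p0) hg0
    set w : V → ℤ := fun v => sT.2 v - p0 v with hw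
    have hwdvd : ∀ v, (n : ℤ) ∣ w v := by
      intro v
      have h0 : ((sT.2 v - p0 v : ℤ) : ZMod n) = 0 := by
        push_cast
        rw [hgT v, hfst, hg0 v, sub_self]
      exact (ZMod.intCast_zmod_eq_zero_iff_dvd _ n).1 h0
    have hadjw : ∀ u v, G.Adj u v → w u = w v := by
      intro u v huv
      have hband := band_iter G B (i - 1) m (σ, p0) hg0 huv
      have h1 : ¬ (n : ℤ) ∣ (p0 u - p0 v) := not_dvd_of_good hg0 huv.ne
      have hdvd : (n : ℤ) ∣ (sT.2 u - sT.2 v) - (p0 u - p0 v) := by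
        have heq : (sT.2 u - sT.2 v) - (p0 u - p0 v) = w u - w v := by simp [hw]; ring
        rw [heq]
        exact dvd_sub (hwdvd u) (hwdvd v)
      have hNpos : (0 : ℤ) < n := by exact_mod_cast (by omega : 0 < n)
      have heq2 : sT.2 u - sT.2 v = p0 u - p0 v := eq_of_band hNpos hdvd h1 hband
      simp only [hw]
      omega
    have hconst : ∀ u v, w u = w v := by
      intro u v
      obtain ⟨walk⟩ := hconn.preconnected u v
      induction walk with
      | nil => rfl
      | cons h q ih => exact (hadjw _ _ h).trans ih
    obtain ⟨v0⟩ : Nonempty V := Fintype.card_pos_iff.mp (by omega)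
    have hsum : ∑ v, sT.2 v = ∑ v, p0 v + (m : ℤ) * (Fintype.card V : ℤ) :=
      sum_iter hn G B (i - 1) m (σ, p0)
    have hsw : ∑ v, w v = (m : ℤ) * (n : ℤ) := by
      simp only [hw]
      rw [Finset.sum_sub_distrib, hsum, hcard]
      ring
    have hsw2 : ∑ v, w v = (n : ℤ) * w v0 := by
      rw [Finset.sum_congr rfl (fun v _ => hconst v v0), Finset.sum_const, Finset.card_univ,
        hcard, nsmul_eq_mul]
    have hw0 : w v0 = (m : ℤ) := by
      have hNne : (n : ℤ) ≠ 0 := by exact_mod_cast (by omega : n ≠ 0)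
      have : (n : ℤ) * w v0 = (n : ℤ) * (m : ℤ) := by rw [← hsw2, hsw]; ring
      exact mul_left_cancel₀ hNne this
    have : (n : ℤ) ∣ (m : ℤ) := hw0 ▸ hwdvd v0
    exact_mod_cast this
end

section
/- Let n ≥ 2 and let β' be the acyclic orientation of Cycle_n obtained from an acyclic orientation β by flipping a source vertex i into a sink (i.e., reversing the orientations of the two edges incident to i). Then for any graph G on n vertices, TPro_β ∘ τ_i = τ_i ∘ TPro_{β'} as maps on Λ_G; in particular, TPro_β and TPro_{β'} are dynamically equivalent (conjugate by a bijection of Λ_G). -/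
open scoped Classical

section Aux
variable {V : Type*} {n : ℕ} (G : SimpleGraph V)

def precR {n : ℕ} (o : ZMod n → Bool) (a b : ZMod n) : Prop :=
  (b = a + 1 ∧ o a = true) ∨ (a = b + 1 ∧ o b = false)

lemma toggle_symm_eq {a b : ZMod n} (σ : V ≃ ZMod n) (h1 : a ≠ b) (h2 : a ≠ b + 1) :
    (toggle G b σ).symm a = σ.symm a := by
  unfold toggle
  split_ifs with h
  · rfl
  · simp [Equiv.swap_apply_of_ne_of_ne h1 h2]

lemma toggle_invol (i : ZMod n) (σ : V ≃ ZMod n) : toggle G i (toggle G i σ) = σ := by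
  unfold toggle
  by_cases h : G.Adj (σ.symm i) (σ.symm (i + 1))
  · simp [h]
  · rw [if_neg h]
    have h1 : ((σ.trans (Equiv.swap i (i + 1))).symm i) = σ.symm (i + 1) := by simp
    have h2 : ((σ.trans (Equiv.swap i (i + 1))).symm (i + 1)) = σ.symm i := by simp
    rw [if_neg (by rw [h1, h2]; exact fun hadj => h hadj.symm)]
    rw [Equiv.trans_assoc]
    simp

lemma toggle_comm {a b : ZMod n} (hab : a ≠ b) (h1 : b ≠ a + 1) (h2 : a ≠ b + 1)
    (σ : V ≃ ZMod n) : toggle G a (toggle G b σ) = toggle G b (toggle G a σ) := by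
  have hs1 : (toggle G b σ).symm a = σ.symm a := toggle_symm_eq G σ hab h2
  have hs2 : (toggle G b σ).symm (a + 1) = σ.symm (a + 1) :=
    toggle_symm_eq G σ (Ne.symm h1) (fun h => hab (by exact add_right_cancel h))
  have ht1 : (toggle G a σ).symm b = σ.symm b := toggle_symm_eq G σ (Ne.symm hab) h1
  have ht2 : (toggle G a σ).symm (b + 1) = σ.symm (b + 1) :=
    toggle_symm_eq G σ (Ne.symm h2) (fun h => hab (by exact (add_right_cancel h).symm))
  have hdisj : (Equiv.swap a (a + 1) : Equiv.Perm (ZMod n)).Disjoint (Equiv.swap b (b + 1)) := by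
    intro x
    by_cases hx : x = a ∨ x = a + 1
    · right
      rcases hx with rfl | rfl
      · exact Equiv.swap_apply_of_ne_of_ne hab h2
      · exact Equiv.swap_apply_of_ne_of_ne (Ne.symm h1) (fun h => hab (add_right_cancel h))
    · left
      push_neg at hx
      exact Equiv.swap_apply_of_ne_of_ne hx.1 hx.2
  have hsw : (Equiv.swap b (b + 1)).trans (Equiv.swap a (a + 1))
      = (Equiv.swap a (a + 1)).trans (Equiv.swap b (b + 1)) := by
    have hc := hdisj.commute
    rw [Commute, SemiconjBy, Equiv.Perm.mul_def, Equiv.Perm.mul_def] at hc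
    exact hc
  conv_lhs => rw [toggle, hs1, hs2]
  conv_rhs => rw [toggle, ht1, ht2]
  by_cases hA : G.Adj (σ.symm a) (σ.symm (a + 1)) <;>
    by_cases hB : G.Adj (σ.symm b) (σ.symm (b + 1)) <;>
      simp [toggle, hA, hB, Equiv.trans_assoc, hsw]

lemma applyToggles_append (L1 L2 : List (ZMod n)) (σ : V ≃ ZMod n) :
    applyToggles G (L1 ++ L2) σ = applyToggles G L2 (applyToggles G L1 σ) :=
  List.foldl_append

lemma pull_front (x : ZMod n) (P S : List (ZMod n))
    (hc : ∀ y ∈ P, ∀ σ : V ≃ ZMod n, toggle G x (toggle G y σ) = toggle G y (toggle G x σ))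
    (σ : V ≃ ZMod n) :
    applyToggles G (P ++ x :: S) σ = applyToggles G (x :: (P ++ S)) σ := by
  induction P generalizing σ with
  | nil => rfl
  | cons p P ih =>
    have e1 : applyToggles G ((p :: P) ++ x :: S) σ
        = applyToggles G (P ++ x :: S) (toggle G p σ) := rfl
    rw [e1, ih (fun y hy => hc y (List.mem_cons_of_mem _ hy))]
    show applyToggles G (P ++ S) (toggle G x (toggle G p σ))
        = applyToggles G (P ++ S) (toggle G p (toggle G x σ))
    rw [hc p (List.mem_cons_self)]

lemma perm_eq (o : ZMod n → Bool) (L1 L2 : List (ZMod n)) (hp : L1.Perm L2) (hnd : L1.Nodup)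
    (h1 : L1.Pairwise (fun a b => ¬ precR o b a))
    (h2 : L2.Pairwise (fun a b => ¬ precR o b a)) (σ : V ≃ ZMod n) :
    applyToggles G L1 σ = applyToggles G L2 σ := by
  induction L1 generalizing L2 σ with
  | nil =>
    rw [← List.Perm.nil_eq hp]
  | cons x T ih =>
    have hx2 : x ∈ L2 := hp.mem_iff.mp (List.mem_cons_self)
    obtain ⟨P, S, rfl⟩ := List.append_of_mem hx2
    have hnd2 : (P ++ x :: S).Nodup := hp.nodup hnd
    have hxP : x ∉ P := by
      intro hxP
      exact (List.disjoint_of_nodup_append hnd2) hxP (List.mem_cons_self)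
    have hpw2 := List.pairwise_append.mp h2
    have hcomm : ∀ y ∈ P, ∀ τ : V ≃ ZMod n,
        toggle G x (toggle G y τ) = toggle G y (toggle G x τ) := by
      intro y hy τ
      have hyx : y ≠ x := fun h => hxP (h ▸ hy)
      have hyT : y ∈ T := by
        have hmem : y ∈ x :: T := hp.symm.mem_iff.mp (List.mem_append_left _ hy)
        exact (List.mem_cons.mp hmem).resolve_left hyx
      have hnyx : ¬ precR o y x := (List.rel_of_pairwise_cons h1) hyT
      have hnxy : ¬ precR o x y := hpw2.2.2 y hy x (List.mem_cons_self)
      have hxy1 : y ≠ x + 1 := by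
        intro h
        by_cases ho : o x = true
        · exact hnxy (Or.inl ⟨h, ho⟩)
        · exact hnyx (Or.inr ⟨h, by simpa using ho⟩)
      have hxy2 : x ≠ y + 1 := by
        intro h
        by_cases ho : o y = true
        · exact hnyx (Or.inl ⟨h, ho⟩)
        · exact hnxy (Or.inr ⟨h, by simpa using ho⟩)
      exact toggle_comm G hyx.symm hxy1 hxy2 τ
    rw [pull_front G x P S hcomm σ]
    have hTperm : T.Perm (P ++ S) :=
      List.Perm.cons_inv (hp.trans List.perm_middle)
    have e2 : applyToggles G (x :: T) σ = applyToggles G T (toggle G x σ) := rfl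
    have e3 : applyToggles G (x :: (P ++ S)) σ
        = applyToggles G (P ++ S) (toggle G x σ) := rfl
    rw [e2, e3]
    exact ih (P ++ S) hTperm hnd.of_cons h1.of_cons
      (h2.sublist ((List.sublist_cons_self x S).append_left P)) (toggle G x σ)


end Aux

lemma linExt_pairwise {n : ℕ} (o : ZMod n → Bool) (π : Fin n ≃ ZMod n) (hπ : linExt o π) :
    (List.ofFn fun k => π k).Pairwise (fun a b => ¬ precR o b a) := by
  rw [List.pairwise_ofFn]
  intro k l hkl hp
  rcases hp with ⟨h1, h2⟩ | ⟨h1, h2⟩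
  · have h := hπ (π l)
    rw [h2] at h
    simp only [if_true] at h
    rw [← h1] at h
    simp only [Equiv.symm_apply_apply] at h
    exact absurd h (not_lt.mpr hkl.le)
  · have h := hπ (π k)
    rw [h2] at h
    simp only [Bool.false_eq_true, if_false] at h
    rw [← h1] at h
    simp only [Equiv.symm_apply_apply] at h
    exact absurd h (not_lt.mpr hkl.le)

lemma precR_congr {n : ℕ} {o o' : ZMod n → Bool} {i a b : ZMod n}
    (hoo' : ∀ j, j ≠ i → j + 1 ≠ i → o' j = o j)
    (ha : a ≠ i) (hb : b ≠ i) : precR o' a b ↔ precR o a b := by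
  unfold precR
  constructor
  · rintro (⟨h1, h2⟩ | ⟨h1, h2⟩)
    · exact Or.inl ⟨h1, by rwa [hoo' a ha (by rw [← h1]; exact hb)] at h2⟩
    · exact Or.inr ⟨h1, by rwa [hoo' b hb (by rw [← h1]; exact ha)] at h2⟩
  · rintro (⟨h1, h2⟩ | ⟨h1, h2⟩)
    · exact Or.inl ⟨h1, by rw [hoo' a ha (by rw [← h1]; exact hb)]; exact h2⟩
    · exact Or.inr ⟨h1, by rw [hoo' b hb (by rw [← h1]; exact ha)]; exact h2⟩

theorem stmt9 {V : Type*} [Fintype V] (n : ℕ) (hn : 2 ≤ n) (hcard : Fintype.card V = n)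
    (G : SimpleGraph V) (o : ZMod n → Bool) (i : ZMod n)
    (hsource : o i = true ∧ o (i - 1) = false)
    (o' : ZMod n → Bool)
    (ho' : o' = fun j => if j = i then false else if j = i - 1 then true else o j)
    (π π' : Fin n ≃ ZMod n) (hπ : linExt o π) (hπ' : linExt o' π') :
    (∀ σ : V ≃ ZMod n, tpro G π (toggle G i σ) = toggle G i (tpro G π' σ)) ∧
      ∃ φ : (V ≃ ZMod n) ≃ (V ≃ ZMod n),
        ∀ σ : V ≃ ZMod n, tpro G π (φ σ) = φ (tpro G π' σ) := by
  haveI : Fact (1 < n) := ⟨hn⟩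
  have hone : (1 : ZMod n) ≠ 0 := one_ne_zero
  have hoi : o' i = false := by rw [ho']; simp
  have him : i - 1 ≠ i := fun h => hone (sub_eq_self.mp h)
  have hoim : o' (i - 1) = true := by rw [ho']; simp [him]
  have hoo' : ∀ j : ZMod n, j ≠ i → j + 1 ≠ i → o' j = o j := by
    intro j hj hj1
    have hj2 : j ≠ i - 1 := by
      intro h; apply hj1; rw [h]; ring
    rw [ho']; simp [hj, hj2]
  set L : List (ZMod n) := List.ofFn (fun k => π k) with hL
  set L' : List (ZMod n) := List.ofFn (fun k => π' k) with hL'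
  have hndL : L.Nodup := List.nodup_ofFn.mpr (fun a b h => π.injective h)
  have hndL' : L'.Nodup := List.nodup_ofFn.mpr (fun a b h => π'.injective h)
  have hmem : ∀ a : ZMod n, a ∈ L := fun a => by
    rw [hL, List.mem_ofFn]; exact ⟨π.symm a, π.apply_symm_apply a⟩
  have hmem' : ∀ a : ZMod n, a ∈ L' := fun a => by
    rw [hL', List.mem_ofFn]; exact ⟨π'.symm a, π'.apply_symm_apply a⟩
  have hpwL : L.Pairwise (fun a b => ¬ precR o b a) := linExt_pairwise o π hπ
  have hpwL' : L'.Pairwise (fun a b => ¬ precR o' b a) := linExt_pairwise o' π' hπ'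
  obtain ⟨P, S, hPS⟩ := List.append_of_mem (hmem i)
  obtain ⟨P', S', hPS'⟩ := List.append_of_mem (hmem' i)
  have hndL1 : (P ++ i :: S).Nodup := by rw [← hPS]; exact hndL
  have hndL1' : (P' ++ i :: S').Nodup := by rw [← hPS']; exact hndL'
  have hpwL1 : (P ++ i :: S).Pairwise (fun a b => ¬ precR o b a) := by
    rw [← hPS]; exact hpwL
  have hpwL1' : (P' ++ i :: S').Pairwise (fun a b => ¬ precR o' b a) := by
    rw [← hPS']; exact hpwL'
  have hiP : i ∉ P := fun h =>
    (List.disjoint_of_nodup_append hndL1) h (List.mem_cons_self)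
  have hiP' : i ∉ P' := fun h =>
    (List.disjoint_of_nodup_append hndL1') h (List.mem_cons_self)
  have hiS' : i ∉ S' := (List.nodup_cons.mp hndL1'.of_append_right).1
  have hpw2 := List.pairwise_append.mp hpwL1
  have hpw2' := List.pairwise_append.mp hpwL1'
  have hcommP : ∀ y ∈ P, ∀ τ : V ≃ ZMod n,
      toggle G i (toggle G y τ) = toggle G y (toggle G i τ) := by
    intro y hy τ
    have hnyi : ¬ precR o i y := hpw2.2.2 y hy i (List.mem_cons_self)
    have hyi : y ≠ i := fun h => hiP (h ▸ hy)
    have hy1 : y ≠ i + 1 := fun h => hnyi (Or.inl ⟨h, hsource.1⟩)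
    have hy2 : i ≠ y + 1 := by
      intro h
      refine hnyi (Or.inr ⟨h, ?_⟩)
      have hy' : y = i - 1 := by rw [h]; ring
      rw [hy']; exact hsource.2
    exact toggle_comm G hyi.symm hy1 hy2 τ
  have hcommS' : ∀ z ∈ S', ∀ τ : V ≃ ZMod n,
      toggle G i (toggle G z τ) = toggle G z (toggle G i τ) := by
    intro z hz τ
    have hnzi : ¬ precR o' z i := List.rel_of_pairwise_cons hpw2'.2.1 hz
    have hzi : z ≠ i := fun h => hiS' (h ▸ hz)
    have hz1 : z ≠ i + 1 := fun h => hnzi (Or.inr ⟨h, hoi⟩)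
    have hz2 : i ≠ z + 1 := by
      intro h
      refine hnzi (Or.inl ⟨h, ?_⟩)
      have hz' : z = i - 1 := by rw [h]; ring
      rw [hz']; exact hoim
    exact toggle_comm G hzi.symm hz1 hz2 τ
  have hperm0 : L.Perm L' :=
    List.perm_of_nodup_nodup_toFinset_eq hndL hndL'
      (by ext a; simp [List.mem_toFinset, hmem a, hmem' a])
  have hA : (P ++ i :: S).Perm (P' ++ i :: S') := by
    rw [← hPS, ← hPS']; exact hperm0
  have hperm : (P ++ S).Perm (P' ++ S') :=
    List.Perm.cons_inv (List.perm_middle.symm.trans (hA.trans List.perm_middle))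
  have hsub : List.Sublist (P ++ S) (P ++ i :: S) := (List.sublist_cons_self i S).append_left P
  have hsub' : List.Sublist (P' ++ S') (P' ++ i :: S') := (List.sublist_cons_self i S').append_left P'
  have hndPS : (P ++ S).Nodup := hndL1.sublist hsub
  have hpw1 : (P ++ S).Pairwise (fun a b => ¬ precR o b a) := hpwL1.sublist hsub
  have hpwo' : (P' ++ S').Pairwise (fun a b => ¬ precR o' b a) := hpwL1'.sublist hsub'
  have hne : ∀ x ∈ P' ++ S', x ≠ i := by
    intro x hx hxi
    subst hxi
    rcases List.mem_append.mp hx with h | h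
    · exact hiP' h
    · exact hiS' h
  have hpw2f : (P' ++ S').Pairwise (fun a b => ¬ precR o b a) := by
    refine hpwo'.imp_of_mem ?_
    intro a b ha hb hnp hp
    exact hnp ((precR_congr hoo' (hne b hb) (hne a ha)).mpr hp)
  have main : ∀ σ : V ≃ ZMod n, tpro G π (toggle G i σ) = toggle G i (tpro G π' σ) := by
    intro σ
    have lhs1 : tpro G π (toggle G i σ) = applyToggles G (P ++ i :: i :: S) σ := by
      have e : tpro G π (toggle G i σ) = applyToggles G (i :: L) σ := rfl
      rw [e, hPS]
      exact (pull_front G i P (i :: S) hcommP σ).symm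
    have lhs2 : applyToggles G (P ++ i :: i :: S) σ = applyToggles G (P ++ S) σ := by
      rw [applyToggles_append, applyToggles_append G P S]
      show applyToggles G S (toggle G i (toggle G i (applyToggles G P σ))) = _
      rw [toggle_invol]
    have rhs1 : toggle G i (tpro G π' σ) = applyToggles G (P' ++ i :: (S' ++ [i])) σ := by
      have e : toggle G i (tpro G π' σ) = applyToggles G (L' ++ [i]) σ := by
        rw [applyToggles_append]; rfl
      rw [e, hPS']
      simp [List.append_assoc]
    have rhs2 : applyToggles G (P' ++ i :: (S' ++ [i])) σ = applyToggles G (P' ++ S') σ := by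
      rw [applyToggles_append, applyToggles_append G P' S']
      show applyToggles G (S' ++ [i]) (toggle G i (applyToggles G P' σ)) = _
      rw [pull_front G i S' [] hcommS']
      show applyToggles G (S' ++ []) (toggle G i (toggle G i (applyToggles G P' σ))) = _
      rw [toggle_invol, List.append_nil]
    rw [lhs1, lhs2, rhs1, rhs2]
    exact perm_eq G o (P ++ S) (P' ++ S') hperm hndPS hpw1 hpw2f σ
  refine ⟨main, Function.Involutive.toPerm (toggle G i) (fun σ => toggle_invol G i σ), fun σ => ?_⟩
  exact main σ
end

section
/- Let S be an independent set of size d in Cycle_n (vertex set ℤ/nℤ), let S-1 = {s-1 : s ∈ S}, and let R = (ℤ/nℤ) \\ (S-1). Let β_S be the acyclic orientation of Cycle_n whose sources are the elements of S and all of whose other edges are oriented clockwise (so its sinks are the elements of S-1). Then as operators on labelings of any graph G with n vertices: cyc ∘ Bro_R ∘ TPro_{β_S} = TPro_{β_S} ∘ cyc ∘ Bro_R. -/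
open scoped Classical

/-! ### Auxiliary development -/

open List

set_option linter.unusedSectionVars false
set_option linter.unnecessarySeqFocus false
set_option linter.unnecessarySimpa false

section ToggleAux
variable {V : Type*} {n : ℕ} (G : SimpleGraph V)

lemma aux_swap_add_one (a b x : ZMod n) :
    Equiv.swap a b x + 1 = Equiv.swap (a+1) (b+1) (x+1) := by
  rcases eq_or_ne x a with rfl|hxa
  · simp
  · rcases eq_or_ne x b with rfl|hxb
    · simp [Equiv.swap_apply_right]
    · rw [Equiv.swap_apply_of_ne_of_ne hxa hxb,
        Equiv.swap_apply_of_ne_of_ne (by simpa using hxa) (by simpa using hxb)]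

lemma aux_toggle_comm {a b : ZMod n} (h1 : b ≠ a - 1) (h2 : b ≠ a) (h3 : b ≠ a + 1)
    (σ : V ≃ ZMod n) : toggle G a (toggle G b σ) = toggle G b (toggle G a σ) := by
  have hab : a ≠ b := h2.symm
  have hab1 : a ≠ b + 1 := by
    intro h; exact h1 (by rw [h]; ring)
  have ha1b : a + 1 ≠ b := fun h => h3 h.symm
  have ha1b1 : a + 1 ≠ b + 1 := by
    intro h; exact h2 (add_right_cancel h).symm
  have key1 : Equiv.swap b (b+1) a = a := Equiv.swap_apply_of_ne_of_ne hab hab1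
  have key2 : Equiv.swap b (b+1) (a+1) = a+1 := Equiv.swap_apply_of_ne_of_ne ha1b ha1b1
  have key3 : Equiv.swap a (a+1) b = b := Equiv.swap_apply_of_ne_of_ne h2 h3
  have key4 : Equiv.swap a (a+1) (b+1) = b+1 :=
    Equiv.swap_apply_of_ne_of_ne hab1.symm ha1b1.symm
  have hcomm : ∀ x, Equiv.swap a (a+1) (Equiv.swap b (b+1) x)
      = Equiv.swap b (b+1) (Equiv.swap a (a+1) x) := by
    intro x
    rcases eq_or_ne x b with rfl|hb
    · simp [Equiv.swap_apply_left, key3, key4]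
    rcases eq_or_ne x (b+1) with rfl|hb1
    · simp [Equiv.swap_apply_right, key3, key4]
    rcases eq_or_ne x a with rfl|ha
    · simp [Equiv.swap_apply_left, key1, key2,
        Equiv.swap_apply_of_ne_of_ne hb hb1]
    rcases eq_or_ne x (a+1) with rfl|ha1
    · simp [Equiv.swap_apply_right, key1, key2,
        Equiv.swap_apply_of_ne_of_ne hb hb1]
    rw [Equiv.swap_apply_of_ne_of_ne hb hb1, Equiv.swap_apply_of_ne_of_ne ha ha1,
      Equiv.swap_apply_of_ne_of_ne hb hb1]
  have e1 : (σ.trans (Equiv.swap b (b+1))).symm a = σ.symm a := by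
    simp [Equiv.symm_trans_apply, key1]
  have e2 : (σ.trans (Equiv.swap b (b+1))).symm (a+1) = σ.symm (a+1) := by
    simp [Equiv.symm_trans_apply, key2]
  have f1 : (σ.trans (Equiv.swap a (a+1))).symm b = σ.symm b := by
    simp [Equiv.symm_trans_apply, key3]
  have f2 : (σ.trans (Equiv.swap a (a+1))).symm (b+1) = σ.symm (b+1) := by
    simp [Equiv.symm_trans_apply, key4]
  have outer : ∀ (c : ZMod n) (X : V ≃ ZMod n), X.symm c = σ.symm c →
      X.symm (c+1) = σ.symm (c+1) →
      toggle G c X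
        = if G.Adj (σ.symm c) (σ.symm (c+1)) then X else X.trans (Equiv.swap c (c+1)) := by
    intro c X hc hc1; unfold toggle; rw [hc, hc1]
  have hX1 : (toggle G b σ).symm a = σ.symm a := by
    unfold toggle; split_ifs with h
    · rfl
    · exact e1
  have hX2 : (toggle G b σ).symm (a+1) = σ.symm (a+1) := by
    unfold toggle; split_ifs with h
    · rfl
    · exact e2
  have hY1 : (toggle G a σ).symm b = σ.symm b := by
    unfold toggle; split_ifs with h
    · rfl
    · exact f1
  have hY2 : (toggle G a σ).symm (b+1) = σ.symm (b+1) := by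
    unfold toggle; split_ifs with h
    · rfl
    · exact f2
  rw [outer a (toggle G b σ) hX1 hX2, outer b (toggle G a σ) hY1 hY2]
  unfold toggle
  by_cases hA : G.Adj (σ.symm a) (σ.symm (a+1)) <;>
    by_cases hB : G.Adj (σ.symm b) (σ.symm (b+1)) <;>
    simp only [hA, hB, if_true, if_false, ite_true, ite_false] <;> try rfl
  ext v
  simp only [Equiv.trans_apply]
  exact hcomm (σ v)

lemma aux_toggle_cycShift (i : ZMod n) (σ : V ≃ ZMod n) :
    toggle G i (cycShift σ) = cycShift (toggle G (i-1) σ) := by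
  show toggle G i (σ.trans (Equiv.addRight (1 : ZMod n)))
      = (toggle G (i-1) σ).trans (Equiv.addRight (1 : ZMod n))
  have hsymm : ∀ x, (σ.trans (Equiv.addRight (1 : ZMod n))).symm x = σ.symm (x - 1) := by
    intro x; simp [Equiv.symm_trans_apply, Equiv.addRight, sub_eq_add_neg]
  unfold toggle
  rw [hsymm, hsymm, show i + 1 - 1 = i from by ring, show i - 1 + 1 = i from by ring]
  by_cases hA : G.Adj (σ.symm (i-1)) (σ.symm i)
  · simp [hA]
  · rw [if_neg hA, if_neg hA]
    ext v
    simp only [Equiv.trans_apply, Equiv.coe_addRight]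
    rw [aux_swap_add_one, show i - 1 + 1 = i from by ring]
end ToggleAux

section ReorderAux
variable {α : Type*} {β : Type*} [DecidableEq α] (f : α → β → β)

lemma aux_foldl_comm_middle (x : α) :
    ∀ (P : List α) (Q : List α), (∀ y ∈ P, ∀ s, f x (f y s) = f y (f x s)) → ∀ s,
    (P ++ x :: Q).foldl (fun t a => f a t) s = (x :: (P ++ Q)).foldl (fun t a => f a t) s := by
  intro P
  induction P with
  | nil => intro Q h s; rfl
  | cons p P ih =>
    intro Q h s
    have hp := h p (List.mem_cons_self)
    have := ih Q (fun y hy s => h y (List.mem_cons_of_mem _ hy) s) (f p s)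
    simp only [List.cons_append, List.foldl_cons] at this ⊢
    rw [this, hp]

lemma aux_pair_sublist_of_cons {a b x : α} {T : List α} (ha : a ≠ x) (h : [a,b] <+ x :: T) :
    [a,b] <+ T := by
  cases h with
  | cons _ h => exact h
  | cons_cons _ h => exact absurd rfl ha

lemma aux_pair_sublist_middle {a b x : α} (ha : a ≠ x) (hb : b ≠ x) (P Q : List α) :
    ([a,b] <+ P ++ x :: Q) ↔ [a,b] <+ P ++ Q := by
  constructor
  · intro h
    have h2 := h.filter (fun y => decide (y ≠ x))
    have hab : ([a,b].filter (fun y => decide (y ≠ x))) = [a,b] := by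
      simp [List.filter_cons, ha, hb]
    rw [hab, List.filter_append, List.filter_cons] at h2
    simp only [ne_eq, not_true_eq_false, decide_false, decide_true, if_false,
      Bool.false_eq_true] at h2
    refine h2.trans (Sublist.append List.filter_sublist ?_)
    have := (List.filter_sublist (p := fun y => decide (y ≠ x)) : List.filter _ Q <+ Q)
    simpa using this
  · intro h
    exact h.trans (Sublist.append (List.Sublist.refl P) (List.sublist_cons_self x Q))

lemma aux_pair_sublist_or {a b : α} : ∀ {L : List α}, a ∈ L → b ∈ L → a ≠ b →
    ([a,b] <+ L ∨ [b,a] <+ L) := by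
  intro L
  induction L with
  | nil => intro h; cases h
  | cons c T ih =>
    intro ha hb hab
    rcases eq_or_ne a c with rfl|hac
    · have hbT : b ∈ T := by
        rcases List.mem_cons.1 hb with h|h
        · exact absurd h.symm hab
        · exact h
      exact Or.inl (List.cons_sublist_cons.2 (List.singleton_sublist.2 hbT))
    rcases eq_or_ne b c with rfl|hbc
    · have haT : a ∈ T := by
        rcases List.mem_cons.1 ha with h|h
        · exact absurd h hab
        · exact h
      exact Or.inr (List.cons_sublist_cons.2 (List.singleton_sublist.2 haT))
    · have haT : a ∈ T := by rcases List.mem_cons.1 ha with h|h; exact absurd h hac; exact h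
      have hbT : b ∈ T := by rcases List.mem_cons.1 hb with h|h; exact absurd h hbc; exact h
      rcases ih haT hbT hab with h|h
      · exact Or.inl (h.cons c)
      · exact Or.inr (h.cons c)

lemma aux_pair_sublist_antisymm {a b : α} : ∀ {L : List α}, L.Nodup → a ≠ b →
    [a,b] <+ L → ¬ ([b,a] <+ L) := by
  intro L
  induction L with
  | nil => intro _ _ h; cases h
  | cons c T ih =>
    intro hnd hab h1 h2
    have hcT : c ∉ T := (List.nodup_cons.1 hnd).1
    have hndT := (List.nodup_cons.1 hnd).2
    cases h1 with
    | cons _ h1' =>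
      cases h2 with
      | cons _ h2' => exact ih hndT hab h1' h2'
      | cons_cons _ h2' => exact hcT (h1'.subset (by simp))
    | cons_cons _ h1' =>
      cases h2 with
      | cons _ h2' => exact hcT (h2'.subset (by simp))
      | cons_cons _ h2' => exact hab rfl

lemma aux_foldl_reorder :
    ∀ (L₁ L₂ : List α), L₁.Perm L₂ → L₁.Nodup →
    (∀ a b, a ∈ L₁ → b ∈ L₁ → a ≠ b → ¬(∀ s, f a (f b s) = f b (f a s)) →
      ([a,b] <+ L₁ ↔ [a,b] <+ L₂)) →
    ∀ s, L₁.foldl (fun t a => f a t) s = L₂.foldl (fun t a => f a t) s := by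
  intro L₁
  induction L₁ with
  | nil =>
    intro L₂ hp _ _ s
    rw [hp.nil_eq.symm]
  | cons x T ih =>
    intro L₂ hp hnd hc s
    have hxL₂ : x ∈ L₂ := hp.subset (List.mem_cons_self)
    obtain ⟨P, Q, rfl⟩ := List.append_of_mem hxL₂
    have hnd₂ : (P ++ x :: Q).Nodup := hp.nodup hnd
    have hxP : x ∉ P := by
      intro hxP
      have := List.nodup_append.1 hnd₂
      exact this.2.2 x hxP x List.mem_cons_self rfl
    have hxT : x ∉ T := (List.nodup_cons.1 hnd).1
    have hndT : T.Nodup := (List.nodup_cons.1 hnd).2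
    have hcommP : ∀ y ∈ P, ∀ t, f x (f y t) = f y (f x t) := by
      intro y hyP
      by_contra hnc
      push_neg at hnc
      have hyx : y ≠ x := fun h => hxP (h ▸ hyP)
      have hyL₁ : y ∈ x :: T := hp.symm.subset (by simp [hyP])
      have hyx2 : ¬(∀ t, f y (f x t) = f x (f y t)) := by
        intro h; obtain ⟨t, ht⟩ := hnc; exact ht (h t).symm
      have hiff := hc y x hyL₁ (List.mem_cons_self) hyx hyx2
      have hR : [y,x] <+ P ++ x :: Q :=
        Sublist.append (List.singleton_sublist.2 hyP)
          (List.cons_sublist_cons.2 (List.nil_sublist Q))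
      have hL : [y,x] <+ x :: T := hiff.2 hR
      have : [y,x] <+ T := aux_pair_sublist_of_cons hyx hL
      exact hxT (this.subset (by simp))
    have step1 : (P ++ x :: Q).foldl (fun t a => f a t) s
        = (x :: (P ++ Q)).foldl (fun t a => f a t) s :=
      aux_foldl_comm_middle f x P Q hcommP s
    rw [step1]
    simp only [List.foldl_cons]
    have hpermT : T.Perm (P ++ Q) := by
      have h1 : (x :: T).Perm (x :: (P ++ Q)) := hp.trans List.perm_middle
      exact h1.cons_inv
    refine ih (P ++ Q) hpermT hndT ?_ (f x s)
    intro a b ha hb hab hnc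
    have hax : a ≠ x := fun h => hxT (h ▸ ha)
    have hbx : b ≠ x := fun h => hxT (h ▸ hb)
    have := hc a b (List.mem_cons_of_mem _ ha) (List.mem_cons_of_mem _ hb) hab hnc
    constructor
    · intro h
      exact (aux_pair_sublist_middle hax hbx P Q).1 (this.1 (h.cons x))
    · intro h
      exact aux_pair_sublist_of_cons hax
        (this.2 ((aux_pair_sublist_middle hax hbx P Q).2 h))
end ReorderAux

section IndexOfAux
variable {α : Type*} {β : Type*} [DecidableEq α] [DecidableEq β]

lemma aux_pair_sublist_iff_idxOf {a b : α} : ∀ {L : List α}, L.Nodup → a ∈ L → b ∈ L →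
    a ≠ b → ([a,b] <+ L ↔ L.idxOf a < L.idxOf b) := by
  intro L
  induction L with
  | nil => intro _ h; cases h
  | cons c T ih =>
    intro hnd ha hb hab
    have hcT : c ∉ T := (List.nodup_cons.1 hnd).1
    have hndT : T.Nodup := (List.nodup_cons.1 hnd).2
    rcases eq_or_ne a c with rfl|hac
    · have hbT : b ∈ T := by
        rcases List.mem_cons.1 hb with h|h
        · exact absurd h.symm hab
        · exact h
      constructor
      · intro _
        rw [List.idxOf_cons_self, List.idxOf_cons_ne _ hab]
        exact Nat.succ_pos _
      · intro _
        exact List.cons_sublist_cons.2 (List.singleton_sublist.2 hbT)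
    rcases eq_or_ne b c with rfl|hbc
    · constructor
      · intro h
        have haT : [a,b].Sublist T := by
          cases h with
          | cons _ h' => exact h'
          | cons_cons _ h' => exact absurd rfl hac
        exact absurd (haT.subset (by simp)) hcT
      · intro h
        rw [List.idxOf_cons_self, List.idxOf_cons_ne _ (Ne.symm hac)] at h
        omega
    · have haT : a ∈ T := by rcases List.mem_cons.1 ha with h|h; exact absurd h hac; exact h
      have hbT : b ∈ T := by rcases List.mem_cons.1 hb with h|h; exact absurd h hbc; exact h
      rw [List.idxOf_cons_ne _ (Ne.symm hac), List.idxOf_cons_ne _ (Ne.symm hbc)]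
      rw [Nat.succ_lt_succ_iff]
      constructor
      · intro h
        cases h with
        | cons _ h' => exact (ih hndT haT hbT hab).1 h'
        | cons_cons _ h' => exact absurd rfl hac
      · intro h
        exact ((ih hndT haT hbT hab).2 h).cons c

lemma aux_idxOf_ofFn {m : ℕ} {f : Fin m → α} (hf : Function.Injective f) (i : Fin m) :
    (List.ofFn f).idxOf (f i) = (i : ℕ) := by
  have hmem : f i ∈ List.ofFn f := by
    rw [List.mem_ofFn]; exact ⟨i, rfl⟩
  have hlt : (List.ofFn f).idxOf (f i) < (List.ofFn f).length :=
    List.idxOf_lt_length_iff.2 hmem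
  have hget := List.idxOf_get (a := f i) (l := List.ofFn f) hlt
  rw [List.get_ofFn] at hget
  have := hf hget
  simpa using congrArg Fin.val this

lemma aux_idxOf_map {g : α → β} (hg : Function.Injective g) (a : α) :
    ∀ (L : List α), (L.map g).idxOf (g a) = L.idxOf a := by
  intro L
  induction L with
  | nil => rfl
  | cons c T ih =>
    rcases eq_or_ne a c with rfl|hac
    · simp [List.idxOf_cons_self]
    · rw [List.map_cons, List.idxOf_cons_ne _ (fun h => hac (hg h).symm),
        List.idxOf_cons_ne _ (Ne.symm hac), ih]

lemma aux_pair_sublist_of_get {L : List α} {i : ℕ} (h : i + 1 < L.length) :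
    [L.get ⟨i, by omega⟩, L.get ⟨i+1, h⟩] <+ L := by
  have hdrop : L.drop i <+ L := List.drop_sublist i L
  have h1 : L.drop i = L.get ⟨i, by omega⟩ :: L.drop (i+1) := by
    rw [List.drop_eq_getElem_cons (by omega)]; rfl
  have h2 : L.drop (i+1) = L.get ⟨i+1, h⟩ :: L.drop (i+2) := by
    rw [List.drop_eq_getElem_cons (by omega)]; rfl
  rw [h1, h2] at hdrop
  exact (List.cons_sublist_cons.2 (List.cons_sublist_cons.2 (List.nil_sublist _))).trans hdrop
end IndexOfAux

section ZModListsAux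
variable {n : ℕ} [NeZero n]

def auxListM (c : ZMod n) : List (ZMod n) :=
  (List.range n).map (fun a : ℕ => c + 1 + (a : ZMod n))

lemma aux_broList_eq (B : Finset (ZMod n)) (c : ZMod n) :
    broList B c = (auxListM c).filter (fun x => decide (x ∈ B)) := by
  unfold broList auxListM
  congr 1
  show List.map _ ((List.range n).flatMap (pure ∘ (fun a : ℕ => (a : ZMod n)))) = _
  rw [List.flatMap_pure_eq_map, List.map_map]
  rfl

lemma aux_zmod_cast_val (x : ZMod n) : ((x.val : ℕ) : ZMod n) = x :=
  ZMod.natCast_rightInverse x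

lemma aux_mem_listM (c x : ZMod n) : x ∈ auxListM c := by
  refine List.mem_map.2 ⟨(x - c - 1).val, List.mem_range.2 (ZMod.val_lt _), ?_⟩
  rw [aux_zmod_cast_val]; ring

lemma aux_nodup_listM (c : ZMod n) : (auxListM c).Nodup := by
  refine List.Nodup.map_on ?_ (List.nodup_range)
  intro x hx y hy h
  rw [List.mem_range] at hx hy
  have h2 : ((x : ZMod n)) = (y : ZMod n) := add_left_cancel h
  have := congrArg ZMod.val h2
  rwa [ZMod.val_cast_of_lt hx, ZMod.val_cast_of_lt hy] at this

lemma aux_length_listM (c : ZMod n) : (auxListM c).length = n := by simp [auxListM]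

lemma aux_get_listM (c : ZMod n) (j : ℕ) (h : j < n) :
    (auxListM c).get ⟨j, by rwa [aux_length_listM]⟩ = c + 1 + (j : ZMod n) := by
  simp [auxListM, List.get_eq_getElem]

lemma aux_pair_sublist_listM (c a : ZMod n) (hac : a ≠ c) :
    [a, a+1] <+ auxListM c := by
  have hn1 : 1 ≤ n := Nat.one_le_iff_ne_zero.2 (NeZero.ne n)
  set j := (a - c - 1).val with hj
  have hjn : j < n := ZMod.val_lt _
  have hjne : j ≠ n - 1 := by
    intro h
    apply hac
    have h1 : ((j : ℕ) : ZMod n) = a - c - 1 := aux_zmod_cast_val _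
    rw [h] at h1
    have h2 : (((n-1 : ℕ)) : ZMod n) = -1 := by
      push_cast [Nat.cast_sub hn1]
      simp
    rw [h2] at h1
    linear_combination -h1
  have hj1 : j + 1 < n := by omega
  have e1 : (auxListM c).get ⟨j, by rwa [aux_length_listM]⟩ = a := by
    rw [aux_get_listM c j hjn, hj, aux_zmod_cast_val]; ring
  have e2 : (auxListM c).get ⟨j+1, by rwa [aux_length_listM]⟩ = a + 1 := by
    rw [aux_get_listM c (j+1) hj1]
    push_cast
    rw [hj, aux_zmod_cast_val]; ring
  have h3 := aux_pair_sublist_of_get (L := auxListM c) (i := j) (by rwa [aux_length_listM])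
  rwa [e1, e2] at h3
end ZModListsAux

section MainAux
variable {V : Type*} {n : ℕ} (G : SimpleGraph V)

lemma aux_applyToggles_append (X Y : List (ZMod n)) (σ : V ≃ ZMod n) :
    applyToggles G (X ++ Y) σ = applyToggles G Y (applyToggles G X σ) := by
  unfold applyToggles; rw [List.foldl_append]

lemma aux_applyToggles_cycShift (L : List (ZMod n)) (σ : V ≃ ZMod n) :
    applyToggles G L (cycShift σ) = cycShift (applyToggles G (L.map (· - 1)) σ) := by
  induction L generalizing σ with
  | nil => rfl
  | cons a L ih =>
    show applyToggles G L (toggle G a (cycShift σ)) = _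
    rw [aux_toggle_cycShift G a σ, ih]
    rfl

lemma aux_hc_of_dir [NeZero n] (X Y : List (ZMod n)) (hXn : X.Nodup) (hYn : Y.Nodup)
    (hXm : ∀ x : ZMod n, x ∈ X) (hYm : ∀ x : ZMod n, x ∈ Y)
    (hdir : ∀ a : ZMod n, a + 1 ≠ a → ([a, a+1] <+ X ↔ [a, a+1] <+ Y)) :
    ∀ a b : ZMod n, a ∈ X → b ∈ X → a ≠ b →
      ¬(∀ s : V ≃ ZMod n, toggle G a (toggle G b s) = toggle G b (toggle G a s)) →
      ([a,b] <+ X ↔ [a,b] <+ Y) := by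
  intro a b _ _ hab hnc
  have hb3 : b = a - 1 ∨ b = a + 1 := by
    by_contra h
    push_neg at h
    rcases eq_or_ne b a with rfl|hba
    · exact hab rfl
    · exact hnc (fun s => aux_toggle_comm G h.1 hba h.2 s)
  rcases hb3 with hb|hb
  · have hba : b + 1 = a := by rw [hb]; ring
    have hne : b + 1 ≠ b := by rw [hba]; exact hab
    have hd := hdir b hne
    rw [hba] at hd
    constructor
    · intro h
      have hnot : ¬ ([b,a] <+ Y) := by rw [← hd]; exact aux_pair_sublist_antisymm hXn hab h
      exact (aux_pair_sublist_or (hYm a) (hYm b) hab).resolve_right hnot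
    · intro h
      have hnot : ¬ ([b,a] <+ X) := by rw [hd]; exact aux_pair_sublist_antisymm hYn hab h
      exact (aux_pair_sublist_or (hXm a) (hXm b) hab).resolve_right hnot
  · subst hb
    exact hdir a (Ne.symm hab)

lemma aux_applyToggles_reorder [NeZero n] (X Y : List (ZMod n)) (hp : X.Perm Y)
    (hXn : X.Nodup) (hXm : ∀ x : ZMod n, x ∈ X) (hYm : ∀ x : ZMod n, x ∈ Y)
    (hdir : ∀ a : ZMod n, a + 1 ≠ a → ([a, a+1] <+ X ↔ [a, a+1] <+ Y))
    (σ : V ≃ ZMod n) :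
    applyToggles G X σ = applyToggles G Y σ := by
  have hYn := hp.nodup hXn
  exact aux_foldl_reorder (fun (a : ZMod n) (t : V ≃ ZMod n) => toggle G a t) X Y hp hXn
    (aux_hc_of_dir G X Y hXn hYn hXm hYm hdir) σ
end MainAux

theorem stmt16 {V : Type*} [Fintype V] (n : ℕ) [NeZero n] (hcard : Fintype.card V = n)
    (G : SimpleGraph V) (S : Finset (ZMod n)) (d : ℕ) (hSd : S.card = d) (hd : 1 ≤ d)
    (hind : ∀ s ∈ S, s + 1 ∉ S)
    (π : Fin n ≃ ZMod n) (hπ : linExt (fun i : ZMod n => decide ((i + 1) ∉ S)) π)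
    (s₀ : ZMod n) (hs₀ : s₀ ∈ S) (σ : V ≃ ZMod n) :
    cycBro G (Finset.univ \ S.image (· - 1)) (s₀ - 1) (tpro G π σ)
      = tpro G π (cycBro G (Finset.univ \ S.image (· - 1)) (s₀ - 1) σ) := by
  classical
  set c : ZMod n := s₀ - 1 with hc
  set Rf : Finset (ZMod n) := Finset.univ \ S.image (· - 1) with hRf
  set K : List (ZMod n) := (S.image (· - 1)).toList with hK
  set B : List (ZMod n) := broList Rf c with hB
  set Lπ : List (ZMod n) := List.ofFn (fun k => π k) with hLπ
  set Lπ' : List (ZMod n) := Lπ.map (· - 1) with hLπ'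
  -- membership characterizations
  have hmemK : ∀ x : ZMod n, x ∈ K ↔ x + 1 ∈ S := by
    intro x
    rw [hK, Finset.mem_toList, Finset.mem_image]
    constructor
    · rintro ⟨s, hs, rfl⟩
      simpa [sub_add_cancel] using hs
    · intro h
      exact ⟨x+1, h, by ring⟩
  have hmemR : ∀ x : ZMod n, x ∈ Rf ↔ x + 1 ∉ S := by
    intro x
    rw [hRf, Finset.mem_sdiff, Finset.mem_image]
    constructor
    · rintro ⟨-, h⟩ hx
      exact h ⟨x+1, hx, by ring⟩
    · intro h
      refine ⟨Finset.mem_univ x, ?_⟩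
      rintro ⟨s, hs, rfl⟩
      exact h (by simpa [sub_add_cancel] using hs)
  have hmemB : ∀ x : ZMod n, x ∈ B ↔ x + 1 ∉ S := by
    intro x
    rw [hB, aux_broList_eq]
    simp only [List.mem_filter, decide_eq_true_eq]
    constructor
    · rintro ⟨-, h⟩
      exact (hmemR x).1 h
    · intro h
      exact ⟨aux_mem_listM c x, (hmemR x).2 h⟩
  have hcK1 : c + 1 ∈ S := by
    rw [hc, show s₀ - 1 + 1 = s₀ from by ring]
    exact hs₀
  -- nodup facts
  have hnodupB : B.Nodup := by
    rw [hB, aux_broList_eq]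
    exact (aux_nodup_listM c).filter _
  have hnodupK : K.Nodup := Finset.nodup_toList _
  have hdisjBK : B.Disjoint K := by
    intro x hxB hxK
    exact (hmemB x).1 hxB ((hmemK x).1 hxK)
  have hnodupBK : (B ++ K).Nodup := List.nodup_append.2 ⟨hnodupB, hnodupK, fun a ha b hb hab => by subst hab; exact hdisjBK ha hb⟩
  have hnodupKB : (K ++ B).Nodup :=
    List.nodup_append.2 ⟨hnodupK, hnodupB, fun a ha b hb hab => by subst hab; exact hdisjBK hb ha⟩
  have hinjπ : Function.Injective (fun k : Fin n => π k) := π.injective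
  have hnodupLπ : Lπ.Nodup := List.nodup_ofFn_ofInjective hinjπ
  have hinjsub : Function.Injective (fun x : ZMod n => x - 1) := by
    intro x y h
    have := congrArg (· + 1) h
    simpa using this
  have hnodupLπ' : Lπ'.Nodup := hnodupLπ.map hinjsub
  -- full membership
  have hmemLπ : ∀ x : ZMod n, x ∈ Lπ := by
    intro x
    rw [hLπ, List.mem_ofFn]
    exact ⟨π.symm x, by simp⟩
  have hmemLπ' : ∀ x : ZMod n, x ∈ Lπ' := by
    intro x
    rw [hLπ']
    exact List.mem_map.2 ⟨x+1, hmemLπ _, by simp⟩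
  have hmemBK : ∀ x : ZMod n, x ∈ B ++ K := by
    intro x
    rw [List.mem_append]
    by_cases h : x + 1 ∈ S
    · exact Or.inr ((hmemK x).2 h)
    · exact Or.inl ((hmemB x).2 h)
  have hmemKB : ∀ x : ZMod n, x ∈ K ++ B := by
    intro x
    rw [List.mem_append]
    by_cases h : x + 1 ∈ S
    · exact Or.inl ((hmemK x).2 h)
    · exact Or.inr ((hmemB x).2 h)
  -- permutations
  have hperm1 : Lπ.Perm (B ++ K) := by
    refine List.perm_of_nodup_nodup_toFinset_eq hnodupLπ hnodupBK ?_
    ext x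
    simp only [List.mem_toFinset]
    exact iff_of_true (hmemLπ x) (hmemBK x)
  have hperm2 : Lπ'.Perm (K ++ B) := by
    refine List.perm_of_nodup_nodup_toFinset_eq hnodupLπ' hnodupKB ?_
    ext x
    simp only [List.mem_toFinset]
    exact iff_of_true (hmemLπ' x) (hmemKB x)
  -- idxOf facts
  have hidxLπ : ∀ x : ZMod n, Lπ.idxOf x = ((π.symm x : Fin n) : ℕ) := by
    intro x
    have h := aux_idxOf_ofFn hinjπ (π.symm x)
    simpa using h
  have hdirLπ : ∀ a : ZMod n, a + 1 ≠ a →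
      ([a, a+1] <+ Lπ ↔ π.symm a < π.symm (a+1)) := by
    intro a hne
    rw [aux_pair_sublist_iff_idxOf hnodupLπ (hmemLπ a) (hmemLπ (a+1)) (Ne.symm hne),
      hidxLπ, hidxLπ]
    exact (Fin.lt_iff_val_lt_val).symm
  have hdirLπ' : ∀ a : ZMod n, a + 1 ≠ a →
      ([a, a+1] <+ Lπ' ↔ π.symm (a+1) < π.symm (a+1+1)) := by
    intro a hne
    rw [aux_pair_sublist_iff_idxOf hnodupLπ' (hmemLπ' a) (hmemLπ' (a+1)) (Ne.symm hne)]
    have i1 : Lπ'.idxOf a = Lπ.idxOf (a+1) := by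
      have h := aux_idxOf_map hinjsub (a+1) Lπ
      simpa [show (a+1)-1 = a from by ring] using h
    have i2 : Lπ'.idxOf (a+1) = Lπ.idxOf (a+1+1) := by
      have h := aux_idxOf_map hinjsub (a+1+1) Lπ
      simpa [show (a+1+1)-1 = a+1 from by ring] using h
    rw [i1, i2, hidxLπ, hidxLπ]
    exact (Fin.lt_iff_val_lt_val).symm
  -- linExt consequences
  have hπlt : ∀ a : ZMod n, a + 1 ∉ S → π.symm a < π.symm (a+1) := by
    intro a ha
    have h := hπ a
    rwa [if_pos (by simpa using ha)] at h
  have hπgt : ∀ a : ZMod n, a + 1 ∈ S → π.symm (a+1) < π.symm a := by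
    intro a ha
    have h := hπ a
    rwa [if_neg (by simpa using ha)] at h
  -- pair in B
  have hpairB : ∀ a : ZMod n, a + 1 ∉ S → a + 1 + 1 ∉ S → [a, a+1] <+ B := by
    intro a h1 h2
    have hac : a ≠ c := by
      intro h
      rw [h] at h1
      exact h1 hcK1
    have hsubM : [a, a+1] <+ auxListM c := aux_pair_sublist_listM c a hac
    rw [hB, aux_broList_eq]
    have hfil := hsubM.filter (fun x => decide (x ∈ Rf))
    rwa [show [a, a+1].filter (fun x => decide (x ∈ Rf)) = [a, a+1] from by
      simp [List.filter_cons, (hmemR a).2 h1, (hmemR (a+1)).2 h2]] at hfil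
  -- direction matching 1 : Lπ vs B ++ K
  have hdir1 : ∀ a : ZMod n, a + 1 ≠ a → ([a, a+1] <+ Lπ ↔ [a, a+1] <+ B ++ K) := by
    intro a hne
    rw [hdirLπ a hne]
    by_cases h2 : a + 1 + 1 ∈ S
    · have hanotS : a + 1 ∉ S := fun h => hind _ h h2
      have haB : a ∈ B := (hmemB a).2 hanotS
      have ha1K : a + 1 ∈ K := (hmemK _).2 h2
      have hsub : [a, a+1] <+ B ++ K :=
        Sublist.append (List.singleton_sublist.2 haB) (List.singleton_sublist.2 ha1K)
      exact iff_of_true (hπlt a hanotS) hsub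
    · by_cases h1 : a + 1 ∈ S
      · have ha1B : a + 1 ∈ B := (hmemB _).2 h2
        have haK : a ∈ K := (hmemK _).2 h1
        have hsub : [a+1, a] <+ B ++ K :=
          Sublist.append (List.singleton_sublist.2 ha1B) (List.singleton_sublist.2 haK)
        exact iff_of_false (lt_asymm (hπgt a h1))
          (aux_pair_sublist_antisymm hnodupBK hne hsub)
      · have hsub : [a, a+1] <+ B ++ K :=
          (hpairB a h1 h2).trans (List.sublist_append_left B K)
        exact iff_of_true (hπlt a h1) hsub
  -- direction matching 2 : Lπ' vs K ++ B
  have hdir2 : ∀ a : ZMod n, a + 1 ≠ a → ([a, a+1] <+ Lπ' ↔ [a, a+1] <+ K ++ B) := by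
    intro a hne
    rw [hdirLπ' a hne]
    by_cases h1 : a + 1 ∈ S
    · have h2 : a + 1 + 1 ∉ S := hind _ h1
      have haK : a ∈ K := (hmemK _).2 h1
      have ha1B : a + 1 ∈ B := (hmemB _).2 h2
      have hsub : [a, a+1] <+ K ++ B :=
        Sublist.append (List.singleton_sublist.2 haK) (List.singleton_sublist.2 ha1B)
      exact iff_of_true (hπlt (a+1) h2) hsub
    · by_cases h2 : a + 1 + 1 ∈ S
      · have ha1K : a + 1 ∈ K := (hmemK _).2 h2
        have haB : a ∈ B := (hmemB _).2 h1
        have hsub : [a+1, a] <+ K ++ B :=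
          Sublist.append (List.singleton_sublist.2 ha1K) (List.singleton_sublist.2 haB)
        exact iff_of_false (lt_asymm (hπgt (a+1) h2))
          (aux_pair_sublist_antisymm hnodupKB hne hsub)
      · have hsub : [a, a+1] <+ K ++ B :=
          (hpairB a h1 h2).trans (List.sublist_append_right K B)
        exact iff_of_true (hπlt (a+1) h2) hsub
  -- reorder equalities
  have heq1 : ∀ τ : V ≃ ZMod n, applyToggles G Lπ τ = applyToggles G (B ++ K) τ :=
    fun τ => aux_applyToggles_reorder G Lπ (B ++ K) hperm1 hnodupLπ hmemLπ hmemBK hdir1 τ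
  have heq2 : ∀ τ : V ≃ ZMod n, applyToggles G Lπ' τ = applyToggles G (K ++ B) τ :=
    fun τ => aux_applyToggles_reorder G Lπ' (K ++ B) hperm2 hnodupLπ' hmemLπ' hmemKB hdir2 τ
  -- final assembly
  show cycShift (applyToggles G B (applyToggles G Lπ σ))
      = applyToggles G Lπ (cycShift (applyToggles G B σ))
  rw [heq1 σ, aux_applyToggles_append G B K σ]
  rw [aux_applyToggles_cycShift G Lπ (applyToggles G B σ)]
  rw [show Lπ.map (· - 1) = Lπ' from rfl]
  rw [heq2 (applyToggles G B σ), aux_applyToggles_append G K B (applyToggles G B σ)]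
end
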